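/- arXiv:1703.07345 — 6 statements merged into one kernel-verified Lean document; each statement's English description precedes it below -/
import Mathlib

section
/- The projection problem min_{w : A·𝟙_{supp(w)} ≤ s} ‖w − v‖² is equivalent to the integer linear program max_{x ∈ {0,1}^p, A x ≤ s} ⟨v², x⟩, in the sense that x* solves the ILP if and only if the vector v_{x*} (keeping entries of v on the support of x*) solves the projection problem. -/
open Classical in
/-- Equivalence of the projection problem onto overlapped cardinality constraints and the
integer linear program: a binary feasible `x*` maximizes `⟨v², x⟩` over binary feasible points
iff `v_{x*}` minimizes `‖w − v‖²` over all `w` whose support indicator is feasible. -/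
theorem stmt2 {m p : ℕ} (v : Fin p → ℝ) (A : Matrix (Fin m) (Fin p) ℕ)
    (s : Fin m → ℕ) (xs : Fin p → ℕ)
    (hxs : ∀ j, xs j = 0 ∨ xs j = 1)
    (hfeas : ∀ i, ∑ j, A i j * xs j ≤ s i) :
    (∀ x : Fin p → ℕ, (∀ j, x j = 0 ∨ x j = 1) → (∀ i, ∑ j, A i j * x j ≤ s i) →
        ∑ j, (v j) ^ 2 * (x j : ℝ) ≤ ∑ j, (v j) ^ 2 * (xs j : ℝ)) ↔
    (∀ w : Fin p → ℝ,
        (∀ i, ∑ j, A i j * (if w j = 0 then 0 else 1) ≤ s i) →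
        ∑ j, (v j - v j * (xs j : ℝ)) ^ 2 ≤ ∑ j, (w j - v j) ^ 2) := by
  have key : ∀ (x : Fin p → ℕ), (∀ j, x j = 0 ∨ x j = 1) →
      ∑ j, (v j - v j * (x j : ℝ)) ^ 2 = ∑ j, (v j)^2 - ∑ j, (v j)^2 * (x j : ℝ) := by
    intro x hx
    rw [← Finset.sum_sub_distrib]
    apply Finset.sum_congr rfl
    intro j _
    rcases hx j with h | h <;> simp [h] <;> ring
  constructor
  · intro hopt w hw
    set xw : Fin p → ℕ := fun j => if w j = 0 then 0 else 1 with hxw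
    have hb : ∀ j, xw j = 0 ∨ xw j = 1 := by
      intro j; by_cases h : w j = 0 <;> simp [hxw, h]
    have h1 := hopt xw hb hw
    rw [key xs hxs]
    have h2 : ∑ j, (v j)^2 - ∑ j, (v j)^2 * (xw j : ℝ) ≤ ∑ j, (w j - v j)^2 := by
      rw [← Finset.sum_sub_distrib]
      apply Finset.sum_le_sum
      intro j _
      by_cases h : w j = 0
      · simp [hxw, h]
      · simp only [hxw, h, if_false, Nat.cast_one, mul_one, sub_self]
        positivity
    linarith
  · intro hopt x hx hfx
    set w : Fin p → ℝ := fun j => v j * x j with hw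
    have hind : ∀ j, (if w j = 0 then 0 else 1 : ℕ) ≤ x j := by
      intro j
      by_cases h : w j = 0
      · simp [h]
      · simp [h]
        rcases hx j with h1 | h1
        · exfalso; apply h; simp [hw, h1]
        · omega
    have hwfeas : ∀ i, ∑ j, A i j * (if w j = 0 then 0 else 1) ≤ s i := by
      intro i
      calc ∑ j, A i j * (if w j = 0 then 0 else 1) ≤ ∑ j, A i j * x j :=
        Finset.sum_le_sum (fun j _ => Nat.mul_le_mul_left _ (hind j))
      _ ≤ s i := hfx i
    have h1 := hopt w hwfeas
    rw [key xs hxs] at h1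
    have h2 : ∑ j, (w j - v j)^2 = ∑ j, (v j)^2 - ∑ j, (v j)^2 * (x j : ℝ) := by
      rw [← Finset.sum_sub_distrib]
      apply Finset.sum_congr rfl
      intro j _
      rcases hx j with h | h <;> simp [hw, h] <;> ring
    rw [h2] at h1
    linarith
end

section
/- Let C ∈ {0,1}^{k×p} be a 0/1 matrix whose rows can be partitioned into two blocks such that every column has at most one '1' within each block. Then the matrix A = [𝟙ᵀ; C] obtained by prepending the all-ones row vector to C is totally unimodular. -/
/-- A matrix is totally unimodular if every square submatrix has determinant in `{-1, 0, 1}`. -/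
def IsTotallyUnimodular' {m n : Type*} [Fintype m] [Fintype n]
    (A : Matrix m n ℤ) : Prop :=
  ∀ (k : ℕ) (r : Fin k → m) (c : Fin k → n),
    Function.Injective r → Function.Injective c →
      (A.submatrix r c).det ∈ ({-1, 0, 1} : Set ℤ)

/-- Auxiliary class of matrices: 0/1 entries, rows colored by `Option Bool` with at most one
`none` row, each column has at most one `1` per `Bool`-color, and every column containing a `1`
in a `true`-colored row also has a `1` in the `none` row. -/
def GoodM {n : ℕ} (M : Matrix (Fin n) (Fin n) ℤ) (f : Fin n → Option Bool) : Prop :=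
  (∀ i j, M i j = 0 ∨ M i j = 1) ∧
  (∀ i i', f i = none → f i' = none → i = i') ∧
  (∀ (j : Fin n) (b : Bool) (i i' : Fin n), f i = some b → f i' = some b →
      M i j = 1 → M i' j = 1 → i = i') ∧
  (∀ (j i i' : Fin n), f i = none → f i' = some true → M i' j = 1 → M i j = 1)

lemma goodM_submatrix {n m : ℕ} {M : Matrix (Fin n) (Fin n) ℤ} {f : Fin n → Option Bool}
    (hG : GoodM M f) (g h : Fin m → Fin n) (hg : Function.Injective g) :
    GoodM (M.submatrix g h) (f ∘ g) := by
  obtain ⟨h01, hnone, hblk, htop⟩ := hG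
  exact ⟨fun i j => h01 _ _, fun i i' hi hi' => hg (hnone _ _ hi hi'),
    fun j b i i' hi hi' h1 h2 => hg (hblk _ b _ _ hi hi' h1 h2),
    fun j i i' hi hi' h1 => htop _ _ _ hi hi' h1⟩

lemma det_single_col {m : ℕ} (M : Matrix (Fin (m + 1)) (Fin (m + 1)) ℤ) (j i0 : Fin (m + 1))
    (h0 : ∀ i, i ≠ i0 → M i j = 0) :
    M.det = (-1) ^ ((i0 : ℕ) + (j : ℕ)) * M i0 j *
      (M.submatrix i0.succAbove j.succAbove).det := by
  rw [Matrix.det_succ_column M j, Finset.sum_eq_single i0]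
  · intro i _ hi
    rw [h0 i hi]; ring
  · intro h; exact absurd (Finset.mem_univ i0) h

lemma mem_mul_aux {k : ℕ} {a d : ℤ} (ha : a = 0 ∨ a = 1)
    (hd : d ∈ ({-1, 0, 1} : Set ℤ)) :
    (-1 : ℤ) ^ k * a * d ∈ ({-1, 0, 1} : Set ℤ) := by
  simp only [Set.mem_insert_iff, Set.mem_singleton_iff] at hd ⊢
  rcases Nat.even_or_odd k with he | ho
  · rw [he.neg_one_pow]
    rcases ha with h | h <;> rcases hd with h' | h' | h' <;> simp [h, h']
  · rw [ho.neg_one_pow]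
    rcases ha with h | h <;> rcases hd with h' | h' | h' <;> simp [h, h']

lemma sum_pair_aux {n : ℕ} (g : Fin n → ℤ) (a b : Fin n) (hab : a ≠ b)
    (h : ∀ i, i ≠ a → i ≠ b → g i = 0) : ∑ i, g i = g a + g b := by
  rw [← Finset.sum_subset (Finset.subset_univ ({a, b} : Finset (Fin n)))]
  · rw [Finset.sum_pair hab]
  · intro i _ hi
    simp only [Finset.mem_insert, Finset.mem_singleton, not_or] at hi
    exact h i hi.1 hi.2

lemma goodM_det : ∀ (n : ℕ) (M : Matrix (Fin n) (Fin n) ℤ) (f : Fin n → Option Bool),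
    GoodM M f → M.det ∈ ({-1, 0, 1} : Set ℤ) := by
  intro n
  induction n with
  | zero => intro M f _; simp [Matrix.det_fin_zero]
  | succ m ih =>
    intro M f hG
    obtain ⟨h01, hnone, hblk, htop⟩ := hG
    by_cases h2 : ∃ (j i0 : Fin (m + 1)), ∀ i, i ≠ i0 → M i j = 0
    · obtain ⟨j, i0, hj⟩ := h2
      rw [det_single_col M j i0 hj]
      exact mem_mul_aux (h01 i0 j)
        (ih _ _ (goodM_submatrix ⟨h01, hnone, hblk, htop⟩ _ _
          Fin.succAbove_right_injective))
    · push_neg at h2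
      have htwo : ∀ j : Fin (m + 1), ∃ i i', i' ≠ i ∧ M i j = 1 ∧ M i' j = 1 := by
        intro j
        obtain ⟨i, -, hi⟩ := h2 j 0
        obtain ⟨i', hne, hi'⟩ := h2 j i
        exact ⟨i, i', hne, (h01 i j).resolve_left hi, (h01 i' j).resolve_left hi'⟩
      by_cases hT : ∃ it, f it = none
      · obtain ⟨it, hit⟩ := hT
        have hone : ∀ j, M it j = 1 := by
          intro j
          by_contra hc
          obtain ⟨i, i', hne, hi, hi'⟩ := htwo j
          have key : ∀ a, M a j = 1 → f a = some false := by
            intro a ha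
            cases hfa : f a with
            | none => exact absurd ((hnone a it hfa hit) ▸ ha) hc
            | some b =>
              cases b with
              | false => rfl
              | true => exact absurd (htop j it a hit hfa ha) hc
          exact hne (hblk j false i' i (key i' hi') (key i hi) hi' hi)
        by_cases hA : ∀ j, ∃ i, f i = some false ∧ M i j = 1
        · have hdet0 : M.det = 0 := by
            apply Matrix.exists_vecMul_eq_zero_iff.mp
            refine ⟨fun i => if f i = some false then 1 else if f i = none then -1 else 0,
              ?_, ?_⟩
            · intro hv0
              have h := congrFun hv0 it
              rw [hit] at h
              simp at h
            · funext j
              obtain ⟨i0, hi0f, hi01⟩ := hA j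
              have hne : i0 ≠ it := by
                intro h; rw [h, hit] at hi0f; exact nomatch hi0f
              have hz : ∀ i, i ≠ i0 → i ≠ it →
                  (if f i = some false then (1 : ℤ) else if f i = none then -1 else 0)
                    * M i j = 0 := by
                intro i ha hb
                cases hfi : f i with
                | none => exact absurd (hnone i it hfi hit) hb
                | some b =>
                  cases b with
                  | false =>
                    rcases h01 i j with h | h
                    · rw [h]; ring
                    · exact absurd (hblk j false i i0 hfi hi0f h hi01) ha
                  | true => simp [hfi]
              simp only [Matrix.vecMul, dotProduct, Pi.zero_apply]
              rw [sum_pair_aux _ i0 it hne hz]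
              simp [hi0f, hit, hi01, hone j]
          rw [hdet0]; simp
        · push_neg at hA
          obtain ⟨u, hu⟩ := hA
          have hu0 : ∀ i, f i = some false → M i u = 0 :=
            fun i hi => (h01 i u).resolve_right (hu i hi)
          obtain ⟨i1, hi1t, hi1u⟩ : ∃ i1, f i1 = some true ∧ M i1 u = 1 := by
            obtain ⟨i, i', hne, hi, hi'⟩ := htwo u
            have key : ∀ a, M a u = 1 → a ≠ it → f a = some true := by
              intro a ha hane
              cases hfa : f a with
              | none => exact absurd (hnone a it hfa hit) hane
              | some b =>
                cases b with
                | false =>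
                  have h0 := hu0 a hfa
                  rw [ha] at h0
                  exact absurd h0 one_ne_zero
                | true => rfl
            by_cases h : i = it
            · exact ⟨i', key i' hi' (by rw [← h]; exact hne), hi'⟩
            · exact ⟨i, key i hi h, hi⟩
          have hit_ne : it ≠ i1 := by
            intro h; rw [h, hi1t] at hit; exact nomatch hit
          set N := M.updateRow it (M it + (-1 : ℤ) • M i1) with hN
          have hdet : N.det = M.det := Matrix.det_updateRow_add_smul_self M hit_ne (-1)
          have hNapp : ∀ i j, i ≠ it → N i j = M i j := fun i j h => by
            rw [hN, Matrix.updateRow_ne h]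
          have hNit : ∀ j, N it j = 1 - M i1 j := by
            intro j
            rw [hN]
            simp [Matrix.updateRow_self, hone j]
            ring
          have hcol0 : ∀ i, i ≠ i1 → N i u = 0 := by
            intro i hi
            by_cases h : i = it
            · rw [h, hNit u, hi1u]; ring
            · rw [hNapp i u h]
              cases hfi : f i with
              | none => exact absurd (hnone i it hfi hit) h
              | some b =>
                cases b with
                | false => exact hu0 i hfi
                | true =>
                  rcases h01 i u with hz | ho
                  · exact hz
                  · exact absurd (hblk u true i i1 hfi hi1t ho hi1u) hi
          have hN1u : N i1 u = 1 := by rw [hNapp i1 u (Ne.symm hit_ne)]; exact hi1u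
          rw [← hdet, det_single_col N u i1 hcol0]
          apply mem_mul_aux (Or.inr hN1u)
          apply ih _ (f ∘ i1.succAbove)
          refine ⟨?_, ?_, ?_, ?_⟩
          · intro i j
            by_cases h : i1.succAbove i = it
            · rw [Matrix.submatrix_apply, h, hNit]
              rcases h01 i1 (u.succAbove j) with hz | ho
              · rw [hz]; right; ring
              · rw [ho]; left; ring
            · rw [Matrix.submatrix_apply, hNapp _ _ h]; exact h01 _ _
          · intro i i' hi hi'
            exact Fin.succAbove_right_injective (hnone _ _ hi hi')
          · intro j b i i' hi hi' hMi hMi'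
            have h1 : i1.succAbove i ≠ it := by
              intro h
              rw [Function.comp_apply, h, hit] at hi
              exact nomatch hi
            have h1' : i1.succAbove i' ≠ it := by
              intro h
              rw [Function.comp_apply, h, hit] at hi'
              exact nomatch hi'
            rw [Matrix.submatrix_apply, hNapp _ _ h1] at hMi
            rw [Matrix.submatrix_apply, hNapp _ _ h1'] at hMi'
            exact Fin.succAbove_right_injective (hblk _ b _ _ hi hi' hMi hMi')
          · intro j i i' hi hi' hMi'
            have hgi : i1.succAbove i = it := hnone _ it hi hit
            have h1' : i1.succAbove i' ≠ it := by
              intro h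
              rw [Function.comp_apply, h, hit] at hi'
              exact nomatch hi'
            rw [Matrix.submatrix_apply, hNapp _ _ h1'] at hMi'
            rw [Matrix.submatrix_apply, hgi, hNit]
            have hz : M i1 (u.succAbove j) = 0 := by
              rcases h01 i1 (u.succAbove j) with hz | ho
              · exact hz
              · exact absurd (hblk _ true _ _ hi' hi1t hMi' ho)
                  (Fin.succAbove_ne i1 i')
            rw [hz]; ring
      · push_neg at hT
        have hkey : ∀ j, ∃ i i', f i = some false ∧ f i' = some true ∧
            M i j = 1 ∧ M i' j = 1 := by
          intro j
          obtain ⟨i, i', hne, hi, hi'⟩ := htwo j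
          obtain ⟨b, hb⟩ := Option.ne_none_iff_exists'.mp (hT i)
          obtain ⟨b', hb'⟩ := Option.ne_none_iff_exists'.mp (hT i')
          have hbb : b ≠ b' := by
            rintro rfl; exact hne (hblk j b i' i hb' hb hi' hi)
          cases b with
          | false =>
            cases b' with
            | false => exact absurd rfl hbb
            | true => exact ⟨i, i', hb, hb', hi, hi'⟩
          | true =>
            cases b' with
            | false => exact ⟨i', i, hb', hb, hi', hi⟩
            | true => exact absurd rfl hbb
        have hdet0 : M.det = 0 := by
          apply Matrix.exists_vecMul_eq_zero_iff.mp
          refine ⟨fun i => if f i = some false then 1 else -1, ?_, ?_⟩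
          · intro hv0
            have h := congrFun hv0 0
            by_cases hf0 : f 0 = some false <;> simp [hf0] at h
          · funext j
            obtain ⟨if_, it_, hf, ht_, h1, h2⟩ := hkey j
            have hne : if_ ≠ it_ := by
              intro h; rw [h, ht_] at hf; simp at hf
            have hz : ∀ i, i ≠ if_ → i ≠ it_ →
                (if f i = some false then (1 : ℤ) else -1) * M i j = 0 := by
              intro i hif hit'
              rcases h01 i j with h | h
              · rw [h]; ring
              · obtain ⟨b, hb⟩ := Option.ne_none_iff_exists'.mp (hT i)
                cases b with
                | false => exact absurd (hblk j false i if_ hb hf h h1) hif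
                | true => exact absurd (hblk j true i it_ hb ht_ h h2) hit'
            simp only [Matrix.vecMul, dotProduct, Pi.zero_apply]
            rw [sum_pair_aux _ if_ it_ hne hz]
            simp [hf, ht_, h1, h2]
        rw [hdet0]; simp

/-- If `C` is a 0/1 matrix whose rows are split into two blocks (via `B`) such that each column
has at most one '1' within each block, then prepending the all-ones row yields a totally
unimodular matrix. -/
theorem stmt6 {k p : ℕ} (C : Matrix (Fin k) (Fin p) ℤ) (B : Fin k → Bool)
    (h01 : ∀ i j, C i j = 0 ∨ C i j = 1)
    (hcol : ∀ (j : Fin p) (b : Bool) (i i' : Fin k),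
      B i = b → B i' = b → C i j = 1 → C i' j = 1 → i = i') :
    IsTotallyUnimodular'
      (Matrix.fromRows (Matrix.of fun (_ : Fin 1) (_ : Fin p) => (1 : ℤ)) C) := by
  intro n r c hr _
  set A := Matrix.fromRows (Matrix.of fun (_ : Fin 1) (_ : Fin p) => (1 : ℤ)) C with hA
  apply goodM_det n (A.submatrix r c)
    (fun i => Sum.elim (fun _ => (none : Option Bool)) (fun i' => some (B i')) (r i))
  refine ⟨?_, ?_, ?_, ?_⟩
  · intro i j
    rw [Matrix.submatrix_apply]
    cases hri : r i with
    | inl a => right; rw [hA, Matrix.fromRows_apply_inl]; rfl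
    | inr a => rw [hA, Matrix.fromRows_apply_inr]; exact h01 a (c j)
  · intro i i' hi hi'
    simp only at hi hi'
    cases hri : r i with
    | inr a => rw [hri] at hi; simp at hi
    | inl a =>
      cases hri' : r i' with
      | inr a' => rw [hri'] at hi'; simp at hi'
      | inl a' =>
        apply hr
        rw [hri, hri', Subsingleton.elim a a']
  · intro j b i i' hi hi' hMi hMi'
    simp only at hi hi'
    cases hri : r i with
    | inl a => rw [hri] at hi; simp at hi
    | inr a =>
      cases hri' : r i' with
      | inl a' => rw [hri'] at hi'; simp at hi'
      | inr a' =>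
        rw [hri] at hi
        rw [hri'] at hi'
        simp only [Sum.elim_inr, Option.some.injEq] at hi hi'
        rw [Matrix.submatrix_apply, hri, hA, Matrix.fromRows_apply_inr] at hMi
        rw [Matrix.submatrix_apply, hri', hA, Matrix.fromRows_apply_inr] at hMi'
        apply hr
        rw [hri, hri', hcol (c j) b a a' hi hi' hMi hMi']
  · intro j i i' hi _ _
    simp only at hi
    cases hri : r i with
    | inr a => rw [hri] at hi; simp at hi
    | inl a =>
      rw [Matrix.submatrix_apply, hri, hA, Matrix.fromRows_apply_inl]
      rfl
end

section
/- If A is a totally unimodular m×p integer matrix and s ∈ ℤ^m is an integer vector, then every vertex (extreme point) of the polytope {x ∈ ℝ^p : A x ≤ s, 0 ≤ x ≤ 1} has all coordinates in {0,1}. -/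
/-- If `A` is totally unimodular and `s` is integer, every extreme point of the polytope
`{x : Ax ≤ s, 0 ≤ x ≤ 1}` has all coordinates in `{0, 1}`. -/
theorem stmt7 {m p : ℕ} (A : Matrix (Fin m) (Fin p) ℤ)
    (hA : IsTotallyUnimodular' A) (s : Fin m → ℤ) (x : Fin p → ℝ)
    (hx : x ∈ Set.extremePoints ℝ {y : Fin p → ℝ |
        (∀ i, ∑ j, (A i j : ℝ) * y j ≤ (s i : ℝ)) ∧ ∀ j, 0 ≤ y j ∧ y j ≤ 1}) :
    ∀ j, x j = 0 ∨ x j = 1 := by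
  classical
  obtain ⟨hxP, hext⟩ := hx
  set M : Matrix (Fin m ⊕ (Fin p ⊕ Fin p)) (Fin p) ℤ :=
    Matrix.fromRows A (Matrix.fromRows 1 (-1)) with hM
  set bv : (Fin m ⊕ (Fin p ⊕ Fin p)) → ℤ := Sum.elim s (Sum.elim 1 0) with hbv
  have hmem : ∀ y : Fin p → ℝ,
      (y ∈ {y : Fin p → ℝ | (∀ i, ∑ j, (A i j : ℝ) * y j ≤ (s i : ℝ)) ∧
        ∀ j, 0 ≤ y j ∧ y j ≤ 1}) ↔ ∀ i, ∑ j, (M i j : ℝ) * y j ≤ (bv i : ℝ) := by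
    intro y
    constructor
    · rintro ⟨h1, h2⟩ i
      rcases i with i | j0 | j0
      · simpa [hM, hbv] using h1 i
      · simpa [hM, hbv, Matrix.one_apply] using (h2 j0).2
      · simpa [hM, hbv, Matrix.one_apply] using (h2 j0).1
    · intro h
      refine ⟨fun i => by simpa [hM, hbv] using h (Sum.inl i), fun j0 => ?_⟩
      constructor
      · have := h (Sum.inr (Sum.inr j0))
        simpa [hM, hbv, Matrix.one_apply] using this
      · have := h (Sum.inr (Sum.inl j0))
        simpa [hM, hbv, Matrix.one_apply] using this

  set T : Set (Fin m ⊕ (Fin p ⊕ Fin p)) := {i | ∑ j, (M i j : ℝ) * x j = (bv i : ℝ)} with hT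
  have key : ∀ z : Fin p → ℝ, (∀ i ∈ T, ∑ j, (M i j : ℝ) * z j = 0) → z = 0 := by
    intro z hz
    by_contra hz0
    set g : (Fin m ⊕ (Fin p ⊕ Fin p)) → ℝ := fun i => ∑ j, (M i j : ℝ) * z j with hg
    set sl : (Fin m ⊕ (Fin p ⊕ Fin p)) → ℝ :=
      fun i => (bv i : ℝ) - ∑ j, (M i j : ℝ) * x j with hsl
    have hsl0 : ∀ i, 0 ≤ sl i := fun i => sub_nonneg.2 ((hmem x).1 hxP i)
    have hslpos : ∀ i ∉ T, 0 < sl i := by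
      intro i hi
      rcases (hsl0 i).lt_or_eq with h | h
      · exact h
      · exfalso
        apply hi
        simp only [hsl] at h
        show ∑ j, (M i j : ℝ) * x j = (bv i : ℝ)
        linarith
    obtain ⟨ε, hε0, hεle⟩ : ∃ ε : ℝ, 0 < ε ∧ ∀ i ∉ T, ε * |g i| ≤ sl i := by
      set S := Finset.univ.filter (fun i => i ∉ T) with hS
      rcases S.eq_empty_or_nonempty with h | h
      · refine ⟨1, one_pos, fun i hi => absurd ?_ (by simp [h] : i ∉ S)⟩
        simp [hS, hi]
      · refine ⟨S.inf' h (fun i => sl i / (|g i| + 1)), ?_, ?_⟩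
        · rw [Finset.lt_inf'_iff]
          intro i hi
          have hiT : i ∉ T := (Finset.mem_filter.1 hi).2
          exact div_pos (hslpos i hiT) (by positivity)
        · intro i hi
          have h1 : S.inf' h (fun i => sl i / (|g i| + 1)) ≤ sl i / (|g i| + 1) :=
            Finset.inf'_le _ (by simp [hS, hi])
          have h2 : (0:ℝ) ≤ |g i| := abs_nonneg _
          have h3 : sl i / (|g i| + 1) * |g i| ≤ sl i := by
            rw [div_mul_eq_mul_div, div_le_iff₀ (by positivity)]
            nlinarith [hslpos i hi]
          calc S.inf' h (fun i => sl i / (|g i| + 1)) * |g i|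
              ≤ sl i / (|g i| + 1) * |g i| := mul_le_mul_of_nonneg_right h1 h2
            _ ≤ sl i := h3
    have hub : ∀ i, ∑ j, (M i j : ℝ) * x j + ε * |g i| ≤ (bv i : ℝ) := by
      intro i
      by_cases hi : i ∈ T
      · have hgi : g i = 0 := hz i hi
        have hxe : ∑ j, (M i j : ℝ) * x j = (bv i : ℝ) := hi
        simp [hgi, hxe]
      · have h1 : ε * |g i| ≤ (bv i : ℝ) - ∑ j, (M i j : ℝ) * x j := hεle i hi
        linarith
    have expand : ∀ (t : ℝ) i, ∑ j, (M i j : ℝ) * ((x + t • z) j)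
        = ∑ j, (M i j : ℝ) * x j + t * g i := by
      intro t i
      rw [hg, Finset.mul_sum, ← Finset.sum_add_distrib]
      apply Finset.sum_congr rfl
      intro j _
      simp only [Pi.add_apply, Pi.smul_apply, smul_eq_mul]
      ring
    have hmem2 : ∀ t : ℝ, |t| ≤ ε → x + t • z ∈ {y : Fin p → ℝ |
        (∀ i, ∑ j, (A i j : ℝ) * y j ≤ (s i : ℝ)) ∧ ∀ j, 0 ≤ y j ∧ y j ≤ 1} := by
      intro t ht
      apply (hmem _).2
      intro i
      have h1 : t * g i ≤ ε * |g i| := by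
        calc t * g i ≤ |t * g i| := le_abs_self _
          _ = |t| * |g i| := abs_mul _ _
          _ ≤ ε * |g i| := mul_le_mul_of_nonneg_right ht (abs_nonneg _)
      rw [expand t i]
      linarith [hub i]
    have hsub : x - ε • z = x + (-ε) • z := by
      rw [neg_smul, ← sub_eq_add_neg]
    have hopen : x ∈ openSegment ℝ (x + ε • z) (x - ε • z) := by
      refine ⟨1/2, 1/2, by norm_num, by norm_num, by norm_num, ?_⟩
      funext j
      simp only [Pi.add_apply, Pi.sub_apply, Pi.smul_apply, smul_eq_mul]
      ring
    have hres := hext (hmem2 ε (by rw [abs_of_pos hε0]))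
      (by rw [hsub]; exact hmem2 (-ε) (by rw [abs_neg, abs_of_pos hε0])) hopen
    have hzz : ε • z = 0 := by
      have h' := hres
      have : x + ε • z - x = 0 := by rw [h']; abel
      simpa using this
    rcases smul_eq_zero.1 hzz with h | h
    · exact hε0.ne' h
    · exact hz0 h

  set Phi : (Fin p → ℝ) →ₗ[ℝ] Module.Dual ℝ (Fin p → ℝ) :=
    { toFun := fun c => ∑ j, c j • LinearMap.proj j
      map_add' := by intro a b; simp [add_smul, Finset.sum_add_distrib]
      map_smul' := by intro t a; simp [smul_smul, Finset.smul_sum] } with hPhi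
  set f : (Fin m ⊕ (Fin p ⊕ Fin p)) → Module.Dual ℝ (Fin p → ℝ) :=
    fun i => Phi (fun j => (M i j : ℝ)) with hf
  have hfapp : ∀ i (z : Fin p → ℝ), f i z = ∑ j, (M i j : ℝ) * z j := by
    intro i z
    simp [hf, hPhi]
  have hspan : Submodule.span ℝ (f '' T) = ⊤ := by
    apply Submodule.span_eq_top_of_ne_zero
    intro z hz
    by_contra hcon
    push_neg at hcon
    apply hz
    apply key
    intro i hi
    rw [← hfapp]
    exact hcon (f i) ⟨i, hi, rfl⟩
  obtain ⟨bs, hbsub, hbspan, hbind⟩ := exists_linearIndependent ℝ (f '' T)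
  rw [hspan] at hbspan
  set hbasis : Module.Basis bs ℝ (Module.Dual ℝ (Fin p → ℝ)) :=
    Module.Basis.mk hbind (by rw [Subtype.range_coe, hbspan]) with hbdef
  haveI : Fintype bs := FiniteDimensional.fintypeBasisIndex hbasis
  have hcard : Fintype.card bs = p := by
    have h1 := Module.finrank_eq_card_basis hbasis
    rw [Subspace.dual_finrank_eq, Module.finrank_fintype_fun_eq_card, Fintype.card_fin] at h1
    omega
  set e : bs ≃ Fin p := Fintype.equivFinOfCardEq hcard with he
  have hpre : ∀ w : bs, ∃ i, i ∈ T ∧ f i = (w : Module.Dual ℝ (Fin p → ℝ)) := by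
    intro w
    obtain ⟨i, hi, hfi⟩ := hbsub w.2
    exact ⟨i, hi, hfi⟩
  choose pre hpreT hprev using hpre
  set r : Fin p → (Fin m ⊕ (Fin p ⊕ Fin p)) := fun a => pre (e.symm a) with hr
  have hfre : ∀ a : Fin p, f (r a) = ((e.symm a : bs) : Module.Dual ℝ (Fin p → ℝ)) := by
    intro a
    exact hprev (e.symm a)
  have hrinj : Function.Injective r := by
    intro a a' h
    have h2 : ((e.symm a : bs) : Module.Dual ℝ (Fin p → ℝ)) = ((e.symm a' : bs) :
        Module.Dual ℝ (Fin p → ℝ)) := by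
      rw [← hfre, ← hfre, h]
    have h3 : e.symm a = e.symm a' := Subtype.ext h2
    simpa using congrArg e h3
  have hindf : LinearIndependent ℝ (fun a : Fin p => f (r a)) := by
    have heq : (fun a : Fin p => f (r a)) = fun a => (hbasis.reindex e) a := by
      funext a
      rw [hfre, Module.Basis.reindex_apply, hbdef, Module.Basis.mk_apply]
    rw [heq]
    exact (hbasis.reindex e).linearIndependent
  set Bz : Matrix (Fin p) (Fin p) ℤ := M.submatrix r id with hB
  set Br : Matrix (Fin p) (Fin p) ℝ := Bz.map (Int.cast : ℤ → ℝ) with hBr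
  have hrows : LinearIndependent ℝ (fun a : Fin p => Br a) := by
    apply LinearIndependent.of_comp Phi
    exact hindf
  have hdetR : Br.det ≠ 0 :=
    ((Matrix.isUnit_iff_isUnit_det Br).1
      (Matrix.linearIndependent_rows_iff_isUnit.1 hrows)).ne_zero
  have hdetcast : ((Bz.det : ℤ) : ℝ) = Br.det := by
    rw [hBr]
    exact RingHom.map_det (Int.castRingHom ℝ) Bz
  have hdetZ : Bz.det ≠ 0 := by
    intro h
    apply hdetR
    rw [← hdetcast, h, Int.cast_zero]
  have hMTU : M.IsTotallyUnimodular := by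
    have hATU : A.IsTotallyUnimodular := by
      intro k fr gc hfr hgc
      have := hA k fr gc hfr hgc
      simp only [Set.mem_insert_iff, Set.mem_singleton_iff] at this
      rcases this with h | h | h
      · exact ⟨SignType.neg, by rw [h]; rfl⟩
      · exact ⟨SignType.zero, by rw [h]; rfl⟩
      · exact ⟨SignType.pos, by rw [h]; rfl⟩
    rw [hM]
    apply hATU.fromRows_unitlike
    intro _ i
    rcases i with j0 | j0
    · exact ⟨j0, SignType.pos, funext fun j => by
        rcases eq_or_ne j0 j with h | h <;>
          simp [Matrix.one_apply, Pi.single_apply, h, eq_comm]⟩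
    · exact ⟨j0, SignType.neg, funext fun j => by
        rcases eq_or_ne j0 j with h | h <;>
          simp [Matrix.one_apply, Pi.single_apply, h, eq_comm]⟩
  have hdet1 : IsUnit Bz.det := by
    obtain ⟨sg, hsg⟩ := hMTU p r id hrinj Function.injective_id
    rw [← hB] at hsg
    cases sg with
    | zero => exact absurd hsg.symm (by simpa using hdetZ)
    | neg =>
      rw [← hsg]
      exact (isUnit_one.neg)
    | pos =>
      rw [← hsg]
      exact isUnit_one
  have hBinv : Bz⁻¹ * Bz = 1 := Matrix.nonsing_inv_mul Bz hdet1
  have hBinv' : Bz * Bz⁻¹ = 1 := Matrix.mul_nonsing_inv Bz hdet1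
  set u : Fin p → ℤ := (Bz⁻¹).mulVec (fun a => bv (r a)) with hu
  have hx_eq : x = fun j => (u j : ℝ) := by
    have h1 : Br.mulVec x = fun a => (bv (r a) : ℝ) := by
      funext a
      have htight : ∑ j, (M (r a) j : ℝ) * x j = (bv (r a) : ℝ) := hpreT (e.symm a)
      simpa [Matrix.mulVec, dotProduct, hBr, hB] using htight
    have h2 : Br.mulVec (fun j => (u j : ℝ)) = fun a => (bv (r a) : ℝ) := by
      have hz2 : Bz.mulVec u = fun a => bv (r a) := by
        rw [hu, Matrix.mulVec_mulVec, hBinv', Matrix.one_mulVec]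
      funext a
      have h3 := congrFun hz2 a
      simp only [Matrix.mulVec, dotProduct] at h3 ⊢
      simp only [hBr, hB, Matrix.map_apply]
      exact_mod_cast congrArg (Int.cast : ℤ → ℝ) h3
    have hBrinv : (Bz⁻¹).map (Int.cast : ℤ → ℝ) * Br = 1 := by
      rw [hBr]
      show (Bz⁻¹).map ⇑(Int.castRingHom ℝ) * Bz.map ⇑(Int.castRingHom ℝ) = 1
      rw [← Matrix.map_mul, hBinv]
      simp
    calc x = Matrix.mulVec 1 x := (Matrix.one_mulVec x).symm
      _ = ((Bz⁻¹).map (Int.cast : ℤ → ℝ) * Br).mulVec x := by rw [hBrinv]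
      _ = ((Bz⁻¹).map (Int.cast : ℤ → ℝ)).mulVec (Br.mulVec x) :=
          (Matrix.mulVec_mulVec _ _ _).symm
      _ = ((Bz⁻¹).map (Int.cast : ℤ → ℝ)).mulVec (Br.mulVec (fun j => (u j : ℝ))) := by
          rw [h1, h2]
      _ = ((Bz⁻¹).map (Int.cast : ℤ → ℝ) * Br).mulVec (fun j => (u j : ℝ)) :=
          Matrix.mulVec_mulVec _ _ _
      _ = (fun j => (u j : ℝ)) := by rw [hBrinv, Matrix.one_mulVec]
  intro j
  have h0 : (0:ℝ) ≤ x j := (hxP.2 j).1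
  have h1 : x j ≤ 1 := (hxP.2 j).2
  rw [hx_eq] at h0 h1 ⊢
  have h0b : (0:ℝ) ≤ (u j : ℝ) := h0
  have h1b : (u j : ℝ) ≤ 1 := h1
  have h2 : (0:ℤ) ≤ u j := by exact_mod_cast h0b
  have h3 : u j ≤ 1 := by exact_mod_cast h1b
  have : u j = 0 ∨ u j = 1 := by omega
  rcases this with h | h <;> simp [h]
end

section
/- Let A = [𝟙ᵀ; C] where C is the row-indicator matrix of a TVCS group structure (groups within 𝒢₁ pairwise disjoint, groups within 𝒢₂ pairwise disjoint), and let s be a nonnegative integer vector. Then the linear program max{⟨v², x⟩ : A x ≤ s, x ∈ [0,1]^p} attains its maximum at an integer vertex x* ∈ {0,1}^p, and this x* is an optimal solution of the integer linear program max{⟨v², x⟩ : A x ≤ s, x ∈ {0,1}^p}. -/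
open Finset Module

lemma sumProj_apply {α : Type*} [Fintype α] (S : Finset α) (d : α → ℝ) :
    (∑ a ∈ S, LinearMap.proj (R := ℝ) (φ := fun _ : α => ℝ) a) d = ∑ a ∈ S, d a := by
  simp [LinearMap.sum_apply]


lemma fiber_count {α δ : Type*} [Fintype α] [DecidableEq α] [Fintype δ] [DecidableEq δ]
    (h : α → Option δ)
    (hne : ∀ e : δ, (univ.filter (fun a => h a = some e)).card ≠ 1) :
    2 * (univ.filter (fun e : δ => (univ.filter (fun a => h a = some e)).Nonempty)).card
      + (univ.filter (fun a => h a = none)).card ≤ Fintype.card α := by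
  classical
  have hpart : Fintype.card α = ∑ o ∈ (univ : Finset (Option δ)), (univ.filter (fun a => h a = o)).card := by
    rw [← card_univ]
    exact card_eq_sum_card_fiberwise (fun a _ => mem_univ _)
  rw [hpart]
  have heq : ∑ o ∈ (univ : Finset (Option δ)), (univ.filter (fun a => h a = o)).card
      = (univ.filter (fun a => h a = none)).card
        + ∑ e : δ, (univ.filter (fun a => h a = some e)).card := by
    exact Fintype.sum_option _
  rw [heq, add_comm]
  apply Nat.add_le_add_left
  calc 2 * (univ.filter (fun e : δ => (univ.filter (fun a => h a = some e)).Nonempty)).card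
      = ∑ e ∈ univ.filter (fun e : δ => (univ.filter (fun a => h a = some e)).Nonempty), 2 := by
        rw [sum_const, smul_eq_mul, mul_comm]
    _ ≤ ∑ e ∈ univ.filter (fun e : δ => (univ.filter (fun a => h a = some e)).Nonempty),
          (univ.filter (fun a => h a = some e)).card := by
        apply sum_le_sum
        intro e he
        simp only [mem_filter] at he
        have h1 := hne e
        have h2 : 1 ≤ (univ.filter (fun a => h a = some e)).card := card_pos.mpr he.2
        omega
    _ ≤ ∑ e : δ, (univ.filter (fun a => h a = some e)).card :=
        sum_le_sum_of_subset (filter_subset _ _)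


lemma fiber_sum_full {α δ : Type*} [Fintype α] [DecidableEq α] [Fintype δ] [DecidableEq δ]
    (h : α → Option δ) (hnone : (univ.filter (fun a => h a = none)) = ∅) (d : α → ℝ) :
    ∑ e ∈ univ.filter (fun e : δ => (univ.filter (fun a => h a = some e)).Nonempty),
      (∑ a ∈ univ.filter (fun a => h a = some e), d a) = ∑ a, d a := by
  classical
  have h0 : ∑ e : δ, (∑ a ∈ univ.filter (fun a => h a = some e), d a) = ∑ a, d a := by
    have hfib := Finset.sum_fiberwise (univ : Finset α) h d
    rw [Fintype.sum_option (fun o => ∑ a ∈ univ.filter (fun a => h a = o), d a)] at hfib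
    rw [hnone] at hfib
    simpa using hfib
  rw [← h0]
  apply sum_subset (filter_subset _ _)
  intro e _ he
  simp only [mem_filter, mem_univ, true_and] at he
  rw [not_nonempty_iff_eq_empty] at he
  rw [he, sum_empty]

lemma kernel_lemma {α β γ : Type*} [Fintype α] [Nonempty α] [DecidableEq α]
    [Fintype β] [DecidableEq β] [Fintype γ] [DecidableEq γ]
    (f : α → Option β) (g : α → Option γ)
    (hf : ∀ b : β, (univ.filter (fun a => f a = some b)).card ≠ 1)
    (hg : ∀ c : γ, (univ.filter (fun a => g a = some c)).card ≠ 1) :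
    ∃ d : α → ℝ, d ≠ 0 ∧ (∀ b : β, ∑ a ∈ univ.filter (fun a => f a = some b), d a = 0)
      ∧ (∀ c : γ, ∑ a ∈ univ.filter (fun a => g a = some c), d a = 0) := by
  by_contra hcon
  push_neg at hcon
  -- from hcon: every d with all fiber sums zero is zero
  have hker : ∀ d : α → ℝ,
      (∀ b : β, ∑ a ∈ univ.filter (fun a => f a = some b), d a = 0) →
      (∀ c : γ, ∑ a ∈ univ.filter (fun a => g a = some c), d a = 0) → d = 0 := by
    intro d hb hc
    by_contra hd
    obtain ⟨c, hcc⟩ := hcon d hd hb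
    exact hcc (hc c)
  classical
  set Bp : Finset β := univ.filter (fun b => (univ.filter (fun a => f a = some b)).Nonempty) with hBp
  set Cp : Finset γ := univ.filter (fun c => (univ.filter (fun a => g a = some c)).Nonempty) with hCp
  -- the linear map
  set T : (α → ℝ) →ₗ[ℝ] ((↥Bp ⊕ ↥Cp) → ℝ) := LinearMap.pi (fun i =>
    Sum.elim (fun b : ↥Bp => ∑ a ∈ univ.filter (fun a => f a = some b.1), LinearMap.proj a)
      (fun c : ↥Cp => ∑ a ∈ univ.filter (fun a => g a = some c.1), LinearMap.proj a) i) with hT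
  have hTapp1 : ∀ d (b : ↥Bp), T d (Sum.inl b) = ∑ a ∈ univ.filter (fun a => f a = some b.1), d a := by
    intro d b; simp [hT, LinearMap.pi_apply, sumProj_apply]
  have hTapp2 : ∀ d (c : ↥Cp), T d (Sum.inr c) = ∑ a ∈ univ.filter (fun a => g a = some c.1), d a := by
    intro d c; simp [hT, LinearMap.pi_apply, sumProj_apply]
  have hinj : Function.Injective T := by
    rw [injective_iff_map_eq_zero]
    intro d hd
    apply hker d
    · intro b
      by_cases hb : (univ.filter (fun a => f a = some b)).Nonempty
      · have : T d (Sum.inl ⟨b, by simp [hBp, hb]⟩) = 0 := by rw [hd]; rfl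
        rwa [hTapp1] at this
      · rw [not_nonempty_iff_eq_empty] at hb; rw [hb]; simp
    · intro c
      by_cases hc : (univ.filter (fun a => g a = some c)).Nonempty
      · have : T d (Sum.inr ⟨c, by simp [hCp, hc]⟩) = 0 := by rw [hd]; rfl
        rwa [hTapp2] at this
      · rw [not_nonempty_iff_eq_empty] at hc; rw [hc]; simp
  have hrank : finrank ℝ (LinearMap.range T) = Fintype.card α := by
    rw [LinearMap.finrank_range_of_inj hinj, finrank_fintype_fun_eq_card]
  have hle : Fintype.card α ≤ Bp.card + Cp.card := by
    have := Submodule.finrank_le (LinearMap.range T)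
    rw [hrank, finrank_fintype_fun_eq_card, Fintype.card_sum, Fintype.card_coe, Fintype.card_coe] at this
    exact this
  have hcf := fiber_count f hf
  have hcg := fiber_count g hg
  rw [← hBp] at hcf
  rw [← hCp] at hcg
  -- equality case
  have hBcard : 2 * Bp.card = Fintype.card α := by omega
  have hCcard : 2 * Cp.card = Fintype.card α := by omega
  have hfnone : (univ.filter (fun a => f a = none)).card = 0 := by omega
  have hgnone : (univ.filter (fun a => g a = none)).card = 0 := by omega
  have hfe : (univ.filter (fun a => f a = none)) = ∅ := card_eq_zero.mp hfnone
  have hge : (univ.filter (fun a => g a = none)) = ∅ := card_eq_zero.mp hgnone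
  -- the functional
  set l : ((↥Bp ⊕ ↥Cp) → ℝ) →ₗ[ℝ] ℝ :=
    (∑ b : ↥Bp, LinearMap.proj (Sum.inl b)) - (∑ c : ↥Cp, LinearMap.proj (Sum.inr c)) with hl
  have hlapp : ∀ w : (↥Bp ⊕ ↥Cp) → ℝ,
      l w = (∑ b : ↥Bp, w (Sum.inl b)) - (∑ c : ↥Cp, w (Sum.inr c)) := by
    intro w
    simp [hl, LinearMap.sub_apply, LinearMap.sum_apply]
  have hrange : LinearMap.range T ≤ LinearMap.ker l := by
    rintro w ⟨d, rfl⟩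
    rw [LinearMap.mem_ker, hlapp]
    have e1 : ∑ b : ↥Bp, T d (Sum.inl b) = ∑ a, d a := by
      have : ∀ b : ↥Bp, T d (Sum.inl b) = ∑ a ∈ univ.filter (fun a => f a = some b.1), d a :=
        hTapp1 d
      rw [Fintype.sum_congr _ _ this]
      rw [← hBp] at *
      rw [Finset.sum_coe_sort Bp (fun b => ∑ a ∈ univ.filter (fun a => f a = some b), d a)]
      rw [hBp]
      exact fiber_sum_full f hfe d
    have e2 : ∑ c : ↥Cp, T d (Sum.inr c) = ∑ a, d a := by
      have : ∀ c : ↥Cp, T d (Sum.inr c) = ∑ a ∈ univ.filter (fun a => g a = some c.1), d a :=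
        hTapp2 d
      rw [Fintype.sum_congr _ _ this]
      rw [Finset.sum_coe_sort Cp (fun c => ∑ a ∈ univ.filter (fun a => g a = some c), d a)]
      rw [hCp]
      exact fiber_sum_full g hge d
    rw [e1, e2, sub_self]
  -- Bp nonempty
  have hcardpos : 0 < Fintype.card α := Fintype.card_pos
  have hBpne : Bp.Nonempty := by
    rw [← card_pos]; omega
  obtain ⟨b0, hb0⟩ := hBpne
  -- l surjective
  have hsurj : Function.Surjective l := by
    intro r
    refine ⟨r • Pi.single (M := fun _ : ↥Bp ⊕ ↥Cp => ℝ) (Sum.inl (⟨b0, hb0⟩ : ↥Bp)) (1:ℝ), ?_⟩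
    rw [map_smul, hlapp]
    simp [Pi.single_apply, Sum.inl.injEq]
  have hkerdim : finrank ℝ (LinearMap.ker l) + 1 = Bp.card + Cp.card := by
    have h3 := LinearMap.finrank_range_add_finrank_ker l
    rw [LinearMap.range_eq_top.mpr hsurj] at h3
    rw [finrank_top, finrank_self, finrank_fintype_fun_eq_card, Fintype.card_sum,
      Fintype.card_coe, Fintype.card_coe] at h3
    omega
  have hfinal : Fintype.card α ≤ finrank ℝ (LinearMap.ker l) := by
    rw [← hrank]
    exact Submodule.finrank_mono hrange
  omega

lemma card_ne_one_of_frac_sum_int {α : Type*} (S : Finset α) (x : α → ℝ)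
    (hx : ∀ a ∈ S, 0 < x a ∧ x a < 1) (z : ℤ) (hz : ∑ a ∈ S, x a = z) : S.card ≠ 1 := by
  intro hone
  obtain ⟨a, ha⟩ := card_eq_one.mp hone
  rw [ha, sum_singleton] at hz
  have hxa := hx a (by simp [ha])
  have h0 : (0:ℝ) < z := by rw [← hz]; exact hxa.1
  have h2 : (z:ℝ) < 1 := by rw [← hz]; exact hxa.2
  have h0' : (0:ℤ) < z := by exact_mod_cast h0
  have h2' : z < 1 := by exact_mod_cast h2
  omega

lemma binary_sum_int {κ : Type*} (S : Finset κ) (x : κ → ℝ)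
    (hbin : ∀ j ∈ S, x j = 0 ∨ x j = 1) : ∃ z : ℤ, ∑ j ∈ S, x j = z := by
  classical
  refine ⟨(S.filter (fun j => x j = 1)).card, ?_⟩
  rw [← Finset.sum_filter_add_sum_filter_not S (fun j => x j = 1) x]
  have e1 : ∑ j ∈ S.filter (fun j => x j = 1), x j = (S.filter (fun j => x j = 1)).card := by
    rw [Finset.sum_congr rfl (fun j hj => (mem_filter.mp hj).2), sum_const, nsmul_eq_mul, mul_one]
  have e2 : ∑ j ∈ S.filter (fun j => ¬ x j = 1), x j = 0 := by
    apply Finset.sum_eq_zero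
    intro j hj
    rcases hbin j (mem_filter.mp hj).1 with h | h
    · exact h
    · exact absurd h (mem_filter.mp hj).2
  rw [e1, e2, add_zero]
  norm_num

lemma sum_subtype_filter {κ : Type*} [Fintype κ] [DecidableEq κ] (F : Finset κ)
    (Q : κ → Prop) [DecidablePred Q] (y : κ → ℝ) :
    ∑ a ∈ univ.filter (fun a : ↥F => Q ↑a), y ↑a = ∑ j ∈ F.filter Q, y j := by
  classical
  rw [sum_filter, sum_filter]
  exact Finset.sum_coe_sort F (fun j => if Q j then y j else 0)

lemma tight_fiber_int {κ : Type*} (S : Finset κ) (x : κ → ℝ) (z0 : ℤ)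
    (ht : ∑ j ∈ S, x j = z0) (P : κ → Prop) [DecidablePred P]
    (hP : ∀ j, ¬ P j → x j = 0 ∨ x j = 1) :
    ∃ z : ℤ, ∑ j ∈ S.filter P, x j = z := by
  classical
  obtain ⟨z1, hz1⟩ := binary_sum_int (S.filter (fun j => ¬ P j)) x
    (fun j hj => hP j (mem_filter.mp hj).2)
  refine ⟨z0 - z1, ?_⟩
  have hsplit := Finset.sum_filter_add_sum_filter_not S P x
  push_cast
  linarith

lemma side_map {p k : ℕ} (gg : Fin k → Finset (Fin p))
    (hdisj : ∀ i i', i ≠ i' → Disjoint (gg i) (gg i'))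
    (tt : Fin k → Prop) (F : Finset (Fin p)) :
    ∃ f : ↥F → Option {i // tt i},
      (∀ a b, f a = some b ↔ ↑a ∈ gg ↑b) ∧
      (∀ a, f a = none ↔ ¬ ∃ b : {i // tt i}, ↑a ∈ gg ↑b) := by
  classical
  refine ⟨fun a => if h : ∃ b : {i // tt i}, (a : Fin p) ∈ gg ↑b then some h.choose else none,
    ?_, ?_⟩
  · intro a b
    constructor
    · intro hfa
      by_cases h : ∃ b' : {i // tt i}, (a : Fin p) ∈ gg ↑b'
      · simp only [dif_pos h, Option.some.injEq] at hfa
        rw [← hfa]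
        exact h.choose_spec
      · simp only [dif_neg h] at hfa
        cases hfa
    · intro hab
      have h : ∃ b' : {i // tt i}, (a : Fin p) ∈ gg ↑b' := ⟨b, hab⟩
      simp only [dif_pos h, Option.some.injEq]
      by_contra hne
      have hvne : (h.choose : Fin k) ≠ ↑b := fun hv => hne (Subtype.ext hv)
      exact (Finset.disjoint_left.mp (hdisj _ _ hvne) h.choose_spec) hab
  · intro a
    by_cases h : ∃ b' : {i // tt i}, (a : Fin p) ∈ gg ↑b'
    · simp only [dif_pos h]; simp [h]
    · simp only [dif_neg h]; simp [h]

lemma exists_dir {p k1 k2 : ℕ}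
    (g1 : Fin k1 → Finset (Fin p)) (g2 : Fin k2 → Finset (Fin p))
    (h1 : ∀ i i', i ≠ i' → Disjoint (g1 i) (g1 i'))
    (h2 : ∀ i i', i ≠ i' → Disjoint (g2 i) (g2 i'))
    (s : Unit ⊕ Fin k1 ⊕ Fin k2 → ℤ)
    (A : Matrix (Unit ⊕ Fin k1 ⊕ Fin k2) (Fin p) ℝ)
    (hA : ∀ j, A (Sum.inl ()) j = 1 ∧
      (∀ i, A (Sum.inr (Sum.inl i)) j = if j ∈ g1 i then 1 else 0) ∧
      (∀ i, A (Sum.inr (Sum.inr i)) j = if j ∈ g2 i then 1 else 0))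
    (x : Fin p → ℝ) (hbox : ∀ j, 0 ≤ x j ∧ x j ≤ 1)
    (hF : ∃ j0, ¬ (x j0 = 0 ∨ x j0 = 1)) :
    ∃ d : Fin p → ℝ, d ≠ 0 ∧ (∀ j, (x j = 0 ∨ x j = 1) → d j = 0) ∧
      (∀ i, ∑ j, A i j * x j = (s i : ℝ) → ∑ j, A i j * d j = 0) := by
  classical
  set P : Fin p → Prop := fun j => ¬ (x j = 0 ∨ x j = 1) with hPdef
  set F : Finset (Fin p) := univ.filter P with hFdef
  have hj0 : hF.choose ∈ F := by rw [hFdef, mem_filter]; exact ⟨mem_univ _, hF.choose_spec⟩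
  haveI : Nonempty ↥F := ⟨⟨hF.choose, hj0⟩⟩
  -- row sum normal forms
  have hrow0 : ∀ y : Fin p → ℝ, ∑ j, A (Sum.inl ()) j * y j = ∑ j, y j := by
    intro y; exact Finset.sum_congr rfl (fun j _ => by rw [(hA j).1, one_mul])
  have hrow1 : ∀ (i) (y : Fin p → ℝ),
      ∑ j, A (Sum.inr (Sum.inl i)) j * y j = ∑ j ∈ g1 i, y j := by
    intro i y
    have e1 : ∑ j, A (Sum.inr (Sum.inl i)) j * y j
        = ∑ j : Fin p, (if j ∈ g1 i then y j else 0) :=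
      Finset.sum_congr rfl (fun j _ => by rw [(hA j).2.1 i]; split <;> simp)
    rw [e1, Finset.sum_ite_mem, univ_inter]
  have hrow2 : ∀ (i) (y : Fin p → ℝ),
      ∑ j, A (Sum.inr (Sum.inr i)) j * y j = ∑ j ∈ g2 i, y j := by
    intro i y
    have e1 : ∑ j, A (Sum.inr (Sum.inr i)) j * y j
        = ∑ j : Fin p, (if j ∈ g2 i then y j else 0) :=
      Finset.sum_congr rfl (fun j _ => by rw [(hA j).2.2 i]; split <;> simp)
    rw [e1, Finset.sum_ite_mem, univ_inter]
  have hfrac : ∀ j, P j → 0 < x j ∧ x j < 1 := by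
    intro j hj
    rw [hPdef] at hj; push_neg at hj
    exact ⟨lt_of_le_of_ne (hbox j).1 (Ne.symm hj.1), lt_of_le_of_ne (hbox j).2 hj.2⟩
  have hbinP : ∀ j, ¬ P j → x j = 0 ∨ x j = 1 := fun j hj => not_not.mp hj
  have haP : ∀ a : ↥F, P ↑a := fun a => (mem_filter.mp a.2).2
  -- tightness predicates
  set t1 : Fin k1 → Prop := fun i => ∑ j ∈ g1 i, x j = (s (Sum.inr (Sum.inl i)) : ℝ) with ht1def
  set t2 : Fin k2 → Prop := fun i => ∑ j ∈ g2 i, x j = (s (Sum.inr (Sum.inr i)) : ℝ) with ht2def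
  haveI : Fintype {i // t1 i} := Fintype.ofFinite _
  haveI : Fintype {i // t2 i} := Fintype.ofFinite _
  obtain ⟨f, hfsome, hfnone⟩ := side_map g1 h1 t1 F
  obtain ⟨g, hgsome, hgnone⟩ := side_map g2 h2 t2 F
  -- fiber = group ∩ F, as sums
  have hgrpF1 : ∀ b : {i // t1 i}, F.filter (fun j => j ∈ g1 ↑b) = (g1 ↑b).filter P := by
    intro b; ext j
    simp only [hFdef, mem_filter, mem_univ, true_and]
    tauto
  have hgrpF2 : ∀ c : {i // t2 i}, F.filter (fun j => j ∈ g2 ↑c) = (g2 ↑c).filter P := by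
    intro c; ext j
    simp only [hFdef, mem_filter, mem_univ, true_and]
    tauto
  have htrans1 : ∀ (y : Fin p → ℝ) (b : {i // t1 i}),
      ∑ a ∈ univ.filter (fun a : ↥F => f a = some b), y ↑a = ∑ j ∈ (g1 ↑b).filter P, y j := by
    intro y b
    rw [filter_congr (fun a _ => hfsome a b), sum_subtype_filter F (fun j => j ∈ g1 ↑b) y,
      hgrpF1 b]
  have htrans2 : ∀ (y : Fin p → ℝ) (c : {i // t2 i}),
      ∑ a ∈ univ.filter (fun a : ↥F => g a = some c), y ↑a = ∑ j ∈ (g2 ↑c).filter P, y j := by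
    intro y c
    rw [filter_congr (fun a _ => hgsome a c), sum_subtype_filter F (fun j => j ∈ g2 ↑c) y,
      hgrpF2 c]
  -- integer fiber sums
  have hint1 : ∀ b : {i // t1 i},
      ∃ z : ℤ, ∑ a ∈ univ.filter (fun a : ↥F => f a = some b), x ↑a = z := by
    intro b
    rw [htrans1 x b]
    exact tight_fiber_int (g1 ↑b) x (s (Sum.inr (Sum.inl ↑b))) b.2 P hbinP
  have hint2 : ∀ c : {i // t2 i},
      ∃ z : ℤ, ∑ a ∈ univ.filter (fun a : ↥F => g a = some c), x ↑a = z := by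
    intro c
    rw [htrans2 x c]
    exact tight_fiber_int (g2 ↑c) x (s (Sum.inr (Sum.inr ↑c))) c.2 P hbinP
  have hcard1 : ∀ b : {i // t1 i},
      (univ.filter (fun a : ↥F => f a = some b)).card ≠ 1 := by
    intro b
    obtain ⟨z, hz⟩ := hint1 b
    exact card_ne_one_of_frac_sum_int _ (fun a : ↥F => x ↑a)
      (fun a _ => hfrac ↑a (haP a)) z hz
  have hcard2 : ∀ c : {i // t2 i},
      (univ.filter (fun a : ↥F => g a = some c)).card ≠ 1 := by
    intro c
    obtain ⟨z, hz⟩ := hint2 c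
    exact card_ne_one_of_frac_sum_int _ (fun a : ↥F => x ↑a)
      (fun a _ => hfrac ↑a (haP a)) z hz
  -- global tightness
  set tG : Prop := ∑ j, x j = (s (Sum.inl ()) : ℝ) with htGdef
  have hintn : tG → ∃ z : ℤ, ∑ a ∈ univ.filter (fun a : ↥F => f a = none), x ↑a = z := by
    intro htG
    have htot : ∃ z : ℤ, ∑ a : ↥F, x ↑a = z := by
      rw [Finset.sum_coe_sort F x, hFdef]
      exact tight_fiber_int univ x (s (Sum.inl ())) htG P hbinP
    choose zf hzf using hint1
    obtain ⟨zt, hzt⟩ := htot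
    refine ⟨zt - ∑ b : {i // t1 i}, zf b, ?_⟩
    have hpart : ∑ o : Option {i // t1 i},
        ∑ a ∈ univ.filter (fun a : ↥F => f a = o), x ↑a = ∑ a : ↥F, x ↑a :=
      Finset.sum_fiberwise univ f (fun a : ↥F => x ↑a)
    rw [Fintype.sum_option (fun o => ∑ a ∈ univ.filter (fun a : ↥F => f a = o), x ↑a)] at hpart
    have hsz : ∑ b : {i // t1 i}, ∑ a ∈ univ.filter (fun a : ↥F => f a = some b), x ↑a
        = ∑ b : {i // t1 i}, (zf b : ℝ) :=
      Fintype.sum_congr _ _ (fun b => hzf b)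
    rw [hsz, hzt] at hpart
    push_cast
    linarith
  have hcardn : tG → (univ.filter (fun a : ↥F => f a = none)).card ≠ 1 := by
    intro htG
    obtain ⟨z, hz⟩ := hintn htG
    exact card_ne_one_of_frac_sum_int _ (fun a : ↥F => x ↑a)
      (fun a _ => hfrac ↑a (haP a)) z hz
  -- obtain the direction on F
  have hd : ∃ dd : ↥F → ℝ, dd ≠ 0 ∧
      (∀ b : {i // t1 i}, ∑ a ∈ univ.filter (fun a : ↥F => f a = some b), dd a = 0) ∧
      (∀ c : {i // t2 i}, ∑ a ∈ univ.filter (fun a : ↥F => g a = some c), dd a = 0) ∧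
      (tG → ∑ a : ↥F, dd a = 0) := by
    by_cases htG : tG
    · obtain ⟨dd, hne, hb, hc⟩ := kernel_lemma (fun a : ↥F => some (f a)) g
        (by
          intro b'
          have hfe : univ.filter (fun a : ↥F => some (f a) = some b')
              = univ.filter (fun a : ↥F => f a = b') :=
            filter_congr (fun a _ => by simp)
          rw [hfe]
          match b' with
          | none => exact hcardn htG
          | some b => exact hcard1 b)
        hcard2
      have hb' : ∀ b' : Option {i // t1 i},
          ∑ a ∈ univ.filter (fun a : ↥F => f a = b'), dd a = 0 := by
        intro b'
        have hfe : univ.filter (fun a : ↥F => some (f a) = some b')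
            = univ.filter (fun a : ↥F => f a = b') :=
          filter_congr (fun a _ => by simp)
        rw [← hfe]
        exact hb b'
      refine ⟨dd, hne, fun b => hb' (some b), hc, fun _ => ?_⟩
      have hpart : ∑ o : Option {i // t1 i},
          ∑ a ∈ univ.filter (fun a : ↥F => f a = o), dd a = ∑ a : ↥F, dd a :=
        Finset.sum_fiberwise univ f dd
      rw [← hpart]
      exact Fintype.sum_eq_zero _ (fun o => hb' o)
    · obtain ⟨dd, hne, hb, hc⟩ := kernel_lemma f g hcard1 hcard2
      exact ⟨dd, hne, hb, hc, fun h => absurd h htG⟩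
  obtain ⟨dd, hdne, hdb, hdc, hdtot⟩ := hd
  -- extend to Fin p
  set D : Fin p → ℝ := fun j => if h : j ∈ F then dd ⟨j, h⟩ else 0 with hDdef
  have hDF : ∀ a : ↥F, D ↑a = dd a := by
    intro a
    rw [hDdef]
    simp only [a.2, dif_pos]
  have hDoff : ∀ j, j ∉ F → D j = 0 := by
    intro j hj
    rw [hDdef]
    simp only [hj, dif_neg, not_false_iff]
  have hsplitD : ∀ S : Finset (Fin p), ∑ j ∈ S, D j = ∑ j ∈ S.filter P, D j := by
    intro S
    rw [← Finset.sum_filter_add_sum_filter_not S P D]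
    have : ∑ j ∈ S.filter (fun j => ¬ P j), D j = 0 := by
      apply Finset.sum_eq_zero
      intro j hj
      apply hDoff
      intro hjF
      rw [hFdef, mem_filter] at hjF
      exact (mem_filter.mp hj).2 hjF.2
    rw [this, add_zero]
  refine ⟨D, ?_, ?_, ?_⟩
  · intro h0
    apply hdne
    funext a
    have := congrFun h0 ↑a
    rw [hDF a] at this
    exact this
  · intro j hj
    apply hDoff
    intro hjF
    rw [hFdef, mem_filter] at hjF
    exact hjF.2 hj
  · intro i hti
    match i with
    | Sum.inl () =>
      rw [hrow0 x] at hti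
      rw [hrow0 D]
      have e1 : ∑ j, D j = ∑ a : ↥F, dd a := by
        rw [← Finset.sum_subset (subset_univ F) (fun j _ hj => hDoff j hj),
          ← Finset.sum_coe_sort F D]
        exact Fintype.sum_congr _ _ hDF
      rw [e1]
      exact hdtot hti
    | Sum.inr (Sum.inl i1) =>
      rw [hrow1 i1 x] at hti
      rw [hrow1 i1 D]
      have hb : t1 i1 := hti
      have e1 : ∑ j ∈ g1 i1, D j = ∑ a ∈ univ.filter (fun a : ↥F => f a = some ⟨i1, hb⟩), dd a := by
        rw [hsplitD (g1 i1), ← htrans1 D ⟨i1, hb⟩]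
        exact Finset.sum_congr rfl (fun a _ => hDF a)
      rw [e1]
      exact hdb ⟨i1, hb⟩
    | Sum.inr (Sum.inr i2) =>
      rw [hrow2 i2 x] at hti
      rw [hrow2 i2 D]
      have hc : t2 i2 := hti
      have e1 : ∑ j ∈ g2 i2, D j = ∑ a ∈ univ.filter (fun a : ↥F => g a = some ⟨i2, hc⟩), dd a := by
        rw [hsplitD (g2 i2), ← htrans2 D ⟨i2, hc⟩]
        exact Finset.sum_congr rfl (fun a _ => hDF a)
      rw [e1]
      exact hdc ⟨i2, hc⟩

lemma round_lemma {p k1 k2 : ℕ}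
    (g1 : Fin k1 → Finset (Fin p)) (g2 : Fin k2 → Finset (Fin p))
    (h1 : ∀ i i', i ≠ i' → Disjoint (g1 i) (g1 i'))
    (h2 : ∀ i i', i ≠ i' → Disjoint (g2 i) (g2 i'))
    (v : Fin p → ℝ) (s : Unit ⊕ Fin k1 ⊕ Fin k2 → ℤ)
    (A : Matrix (Unit ⊕ Fin k1 ⊕ Fin k2) (Fin p) ℝ)
    (hA : ∀ j, A (Sum.inl ()) j = 1 ∧
      (∀ i, A (Sum.inr (Sum.inl i)) j = if j ∈ g1 i then 1 else 0) ∧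
      (∀ i, A (Sum.inr (Sum.inr i)) j = if j ∈ g2 i then 1 else 0)) :
    ∀ n : ℕ, ∀ x : Fin p → ℝ,
      (univ.filter (fun j => ¬ (x j = 0 ∨ x j = 1))).card
        + (univ.filter (fun i : Unit ⊕ Fin k1 ⊕ Fin k2 =>
            ∑ j, A i j * x j ≠ (s i : ℝ))).card ≤ n →
      (∀ i, ∑ j, A i j * x j ≤ (s i : ℝ)) → (∀ j, 0 ≤ x j ∧ x j ≤ 1) →
      ∃ y : Fin p → ℝ, (∀ j, y j = 0 ∨ y j = 1) ∧ (∀ i, ∑ j, A i j * y j ≤ (s i : ℝ)) ∧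
        ∑ j, v j ^ 2 * x j ≤ ∑ j, v j ^ 2 * y j := by
  classical
  intro n
  induction n with
  | zero =>
    intro x hm hfeas hbox
    by_cases hbin : ∀ j, x j = 0 ∨ x j = 1
    · exact ⟨x, hbin, hfeas, le_refl _⟩
    · exfalso
      obtain ⟨j0, hj0⟩ := not_forall.mp hbin
      have : 0 < (univ.filter (fun j => ¬ (x j = 0 ∨ x j = 1))).card :=
        card_pos.mpr ⟨j0, mem_filter.mpr ⟨mem_univ _, hj0⟩⟩
      omega
  | succ n ih =>
    intro x hm hfeas hbox
    by_cases hbin : ∀ j, x j = 0 ∨ x j = 1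
    · exact ⟨x, hbin, hfeas, le_refl _⟩
    -- get a direction with nonnegative objective
    have hdir : ∃ d : Fin p → ℝ, d ≠ 0 ∧ (∀ j, (x j = 0 ∨ x j = 1) → d j = 0) ∧
        (∀ i, ∑ j, A i j * x j = (s i : ℝ) → ∑ j, A i j * d j = 0) ∧
        0 ≤ ∑ j, v j ^ 2 * d j := by
      obtain ⟨d, hd0, hdsupp, hdtight⟩ :=
        exists_dir g1 g2 h1 h2 s A hA x hbox (not_forall.mp hbin)
      rcases le_or_gt 0 (∑ j, v j ^ 2 * d j) with hsign | hsign
      · exact ⟨d, hd0, hdsupp, hdtight, hsign⟩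
      · refine ⟨-d, neg_ne_zero.mpr hd0, fun j hj => by simp [hdsupp j hj], fun i hti => ?_, ?_⟩
        · have := hdtight i hti
          have e : ∑ j, A i j * (-d) j = -∑ j, A i j * d j := by
            rw [← Finset.sum_neg_distrib]
            exact Finset.sum_congr rfl (fun j _ => by simp [mul_neg])
          rw [e, this, neg_zero]
        · have e : ∑ j, v j ^ 2 * (-d) j = -∑ j, v j ^ 2 * d j := by
            rw [← Finset.sum_neg_distrib]
            exact Finset.sum_congr rfl (fun j _ => by simp [mul_neg])
          rw [e]
          linarith
    obtain ⟨d, hd0, hdsupp, hdtight, hsign⟩ := hdir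
    -- the blocking step size
    set Rrow : Finset ℝ := (univ.filter (fun i : Unit ⊕ Fin k1 ⊕ Fin k2 =>
        0 < ∑ j, A i j * d j)).image
        (fun i => ((s i : ℝ) - ∑ j, A i j * x j) / (∑ j, A i j * d j)) with hRrow
    set Rup : Finset ℝ := (univ.filter (fun j => 0 < d j)).image
        (fun j => (1 - x j) / d j) with hRup
    set Rdn : Finset ℝ := (univ.filter (fun j => d j < 0)).image
        (fun j => x j / (- d j)) with hRdn
    set R : Finset ℝ := Rrow ∪ Rup ∪ Rdn with hR
    have hRne : R.Nonempty := by
      have : ∃ j, d j ≠ 0 := by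
        by_contra hc
        push_neg at hc
        exact hd0 (funext hc)
      obtain ⟨j, hj⟩ := this
      rcases hj.lt_or_gt with hlt | hgt
      · exact ⟨x j / (- d j), by
          rw [hR]
          refine mem_union_right _ ?_
          rw [hRdn]
          exact mem_image.mpr ⟨j, mem_filter.mpr ⟨mem_univ _, hlt⟩, rfl⟩⟩
      · exact ⟨(1 - x j) / d j, by
          rw [hR]
          refine mem_union_left _ (mem_union_right _ ?_)
          rw [hRup]
          exact mem_image.mpr ⟨j, mem_filter.mpr ⟨mem_univ _, hgt⟩, rfl⟩⟩
    set t : ℝ := R.min' hRne with ht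
    have htnonneg : 0 ≤ t := by
      apply Finset.le_min'
      intro r hr
      rw [hR] at hr
      rcases mem_union.mp hr with hr' | hr'
      · rcases mem_union.mp hr' with hr'' | hr''
        · obtain ⟨i, hi, rfl⟩ := mem_image.mp hr''
          have hpos := (mem_filter.mp hi).2
          exact div_nonneg (by linarith [hfeas i]) (le_of_lt hpos)
        · obtain ⟨j, hj, rfl⟩ := mem_image.mp hr''
          have hpos := (mem_filter.mp hj).2
          exact div_nonneg (by linarith [(hbox j).2]) (le_of_lt hpos)
      · obtain ⟨j, hj, rfl⟩ := mem_image.mp hr'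
        have hneg := (mem_filter.mp hj).2
        exact div_nonneg (hbox j).1 (by linarith)
    set x' : Fin p → ℝ := fun j => x j + t * d j with hx'
    have hexp : ∀ i, ∑ j, A i j * x' j = (∑ j, A i j * x j) + t * ∑ j, A i j * d j := by
      intro i
      rw [Finset.mul_sum, ← Finset.sum_add_distrib]
      exact Finset.sum_congr rfl (fun j _ => by rw [hx']; ring)
    have hobj : ∑ j, v j ^ 2 * x' j = (∑ j, v j ^ 2 * x j) + t * ∑ j, v j ^ 2 * d j := by
      rw [Finset.mul_sum, ← Finset.sum_add_distrib]
      exact Finset.sum_congr rfl (fun j _ => by rw [hx']; ring)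
    have hfeas' : ∀ i, ∑ j, A i j * x' j ≤ (s i : ℝ) := by
      intro i
      rw [hexp i]
      rcases le_or_gt (∑ j, A i j * d j) 0 with hsl | hsl
      · have : t * ∑ j, A i j * d j ≤ 0 := mul_nonpos_of_nonneg_of_nonpos htnonneg hsl
        linarith [hfeas i]
      · have hmem : ((s i : ℝ) - ∑ j, A i j * x j) / (∑ j, A i j * d j) ∈ R := by
          rw [hR]
          refine mem_union_left _ (mem_union_left _ ?_)
          rw [hRrow]
          exact mem_image.mpr ⟨i, mem_filter.mpr ⟨mem_univ _, hsl⟩, rfl⟩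
        have := Finset.min'_le R _ hmem
        rw [← ht] at this
        have h2 : t * (∑ j, A i j * d j) ≤ (s i : ℝ) - ∑ j, A i j * x j := by
          rw [← le_div_iff₀ hsl]
          exact this
        linarith
    have hbox' : ∀ j, 0 ≤ x' j ∧ x' j ≤ 1 := by
      intro j
      rcases lt_trichotomy (d j) 0 with hdj | hdj | hdj
      · have hmem : x j / (- d j) ∈ R := by
          rw [hR]
          exact mem_union_right _ (by
            rw [hRdn]
            exact mem_image.mpr ⟨j, mem_filter.mpr ⟨mem_univ _, hdj⟩, rfl⟩)
        have hle := Finset.min'_le R _ hmem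
        rw [← ht] at hle
        have h2 : t * (- d j) ≤ x j := by
          rw [← le_div_iff₀ (by linarith : (0:ℝ) < - d j)]
          exact hle
        constructor
        · rw [hx']; dsimp only; nlinarith
        · have : t * d j ≤ 0 := mul_nonpos_of_nonneg_of_nonpos htnonneg (le_of_lt hdj)
          rw [hx']; dsimp only; linarith [(hbox j).2]
      · rw [hx']; dsimp only; rw [hdj]; simpa using hbox j
      · have hmem : (1 - x j) / d j ∈ R := by
          rw [hR]
          exact mem_union_left _ (mem_union_right _ (by
            rw [hRup]
            exact mem_image.mpr ⟨j, mem_filter.mpr ⟨mem_univ _, hdj⟩, rfl⟩))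
        have hle := Finset.min'_le R _ hmem
        rw [← ht] at hle
        have h2 : t * d j ≤ 1 - x j := by
          rw [← le_div_iff₀ hdj]
          exact hle
        constructor
        · have : 0 ≤ t * d j := mul_nonneg htnonneg (le_of_lt hdj)
          rw [hx']; dsimp only; linarith [(hbox j).1]
        · rw [hx']; dsimp only; linarith
    -- monotonicity of the two bad sets
    have hfracmono : (univ.filter (fun j => ¬ (x' j = 0 ∨ x' j = 1)))
        ⊆ (univ.filter (fun j => ¬ (x j = 0 ∨ x j = 1))) := by
      intro j hj
      rw [mem_filter] at hj ⊢
      refine ⟨mem_univ _, ?_⟩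
      intro hbinj
      have hdj := hdsupp j hbinj
      apply hj.2
      rw [hx']; dsimp only; rw [hdj, mul_zero, add_zero]
      exact hbinj
    have htightmono : (univ.filter (fun i : Unit ⊕ Fin k1 ⊕ Fin k2 =>
        ∑ j, A i j * x' j ≠ (s i : ℝ)))
        ⊆ (univ.filter (fun i => ∑ j, A i j * x j ≠ (s i : ℝ))) := by
      intro i hi
      rw [mem_filter] at hi ⊢
      refine ⟨mem_univ _, ?_⟩
      intro hti
      apply hi.2
      rw [hexp i, hdtight i hti, mul_zero, add_zero]
      exact hti
    -- something becomes blocked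
    have hstrict : (univ.filter (fun j => ¬ (x' j = 0 ∨ x' j = 1))).card
        + (univ.filter (fun i : Unit ⊕ Fin k1 ⊕ Fin k2 =>
            ∑ j, A i j * x' j ≠ (s i : ℝ))).card
        < (univ.filter (fun j => ¬ (x j = 0 ∨ x j = 1))).card
        + (univ.filter (fun i => ∑ j, A i j * x j ≠ (s i : ℝ))).card := by
      have htR : t ∈ R := Finset.min'_mem R hRne
      rw [hR] at htR
      rcases mem_union.mp htR with hr' | hr'
      · rcases mem_union.mp hr' with hr'' | hr''
        · -- a row became tight
          obtain ⟨i, hi, hti⟩ := mem_image.mp hr''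
          have hpos := (mem_filter.mp hi).2
          have hwasnt : ∑ j, A i j * x j ≠ (s i : ℝ) := by
            intro hteq
            rw [hdtight i hteq] at hpos
            exact lt_irrefl _ hpos
          have hnow : ∑ j, A i j * x' j = (s i : ℝ) := by
            rw [hexp i, ← hti, div_mul_cancel₀ _ (ne_of_gt hpos)]
            ring
          have hss : (univ.filter (fun i : Unit ⊕ Fin k1 ⊕ Fin k2 =>
              ∑ j, A i j * x' j ≠ (s i : ℝ)))
              ⊂ (univ.filter (fun i => ∑ j, A i j * x j ≠ (s i : ℝ))) := by
            refine Finset.ssubset_iff_of_subset htightmono |>.mpr ?_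
            exact ⟨i, mem_filter.mpr ⟨mem_univ _, hwasnt⟩, by
              rw [mem_filter]; push_neg; intro _; exact hnow⟩
          have := Finset.card_lt_card hss
          have h2 := Finset.card_le_card hfracmono
          omega
        · -- a coordinate hit 1
          obtain ⟨j, hj, htj⟩ := mem_image.mp hr''
          have hpos := (mem_filter.mp hj).2
          have hwasnt : ¬ (x j = 0 ∨ x j = 1) := by
            intro hbinj
            rw [hdsupp j hbinj] at hpos
            exact lt_irrefl _ hpos
          have hnow : x' j = 1 := by
            rw [hx']; dsimp only; rw [← htj, div_mul_cancel₀ _ (ne_of_gt hpos)]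
            ring
          have hss : (univ.filter (fun j => ¬ (x' j = 0 ∨ x' j = 1)))
              ⊂ (univ.filter (fun j => ¬ (x j = 0 ∨ x j = 1))) := by
            refine Finset.ssubset_iff_of_subset hfracmono |>.mpr ?_
            exact ⟨j, mem_filter.mpr ⟨mem_univ _, hwasnt⟩, by
              rw [mem_filter]; push_neg; intro _; exact Or.inr hnow⟩
          have := Finset.card_lt_card hss
          have h2 := Finset.card_le_card htightmono
          omega
      · -- a coordinate hit 0
        obtain ⟨j, hj, htj⟩ := mem_image.mp hr'
        have hneg := (mem_filter.mp hj).2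
        have hwasnt : ¬ (x j = 0 ∨ x j = 1) := by
          intro hbinj
          rw [hdsupp j hbinj] at hneg
          exact lt_irrefl _ hneg
        have hnow : x' j = 0 := by
          rw [hx']; dsimp only
          have : t * d j = - x j := by
            have hne : d j ≠ 0 := ne_of_lt hneg
            rw [← htj]
            rw [div_neg, neg_mul, div_mul_cancel₀ _ hne]
          rw [this]; ring
        have hss : (univ.filter (fun j => ¬ (x' j = 0 ∨ x' j = 1)))
            ⊂ (univ.filter (fun j => ¬ (x j = 0 ∨ x j = 1))) := by
          refine Finset.ssubset_iff_of_subset hfracmono |>.mpr ?_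
          exact ⟨j, mem_filter.mpr ⟨mem_univ _, hwasnt⟩, by
            rw [mem_filter]; push_neg; intro _; exact Or.inl hnow⟩
        have := Finset.card_lt_card hss
        have h2 := Finset.card_le_card htightmono
        omega
    obtain ⟨y, hybin, hyfeas, hyobj⟩ := ih x' (by omega) hfeas' hbox'
    refine ⟨y, hybin, hyfeas, ?_⟩
    have : ∑ j, v j ^ 2 * x j ≤ ∑ j, v j ^ 2 * x' j := by
      rw [hobj]
      nlinarith
    linarith




/-- For a TVCS structure (`𝒢₀ = {[p]}`, `𝒢₁`, `𝒢₂` each consisting of pairwise disjoint groups),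
the LP `max{⟨v², x⟩ : Ax ≤ s, x ∈ [0,1]^p}` attains its maximum at a binary point `x*`,
which is also optimal for the corresponding integer linear program. -/
theorem stmt8 {p k1 k2 : ℕ}
    (g1 : Fin k1 → Finset (Fin p)) (g2 : Fin k2 → Finset (Fin p))
    (h1 : ∀ i i', i ≠ i' → Disjoint (g1 i) (g1 i'))
    (h2 : ∀ i i', i ≠ i' → Disjoint (g2 i) (g2 i'))
    (v : Fin p → ℝ) (s : Unit ⊕ Fin k1 ⊕ Fin k2 → ℤ) (hs : ∀ i, 0 ≤ s i)
    (A : Matrix (Unit ⊕ Fin k1 ⊕ Fin k2) (Fin p) ℝ)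
    (hA : ∀ j, A (Sum.inl ()) j = 1 ∧
      (∀ i, A (Sum.inr (Sum.inl i)) j = if j ∈ g1 i then 1 else 0) ∧
      (∀ i, A (Sum.inr (Sum.inr i)) j = if j ∈ g2 i then 1 else 0)) :
    ∃ xs : Fin p → ℝ,
      (∀ j, xs j = 0 ∨ xs j = 1) ∧
      (∀ i, ∑ j, A i j * xs j ≤ (s i : ℝ)) ∧
      (∀ x : Fin p → ℝ, (∀ i, ∑ j, A i j * x j ≤ (s i : ℝ)) →
        (∀ j, 0 ≤ x j ∧ x j ≤ 1) →
        ∑ j, (v j) ^ 2 * x j ≤ ∑ j, (v j) ^ 2 * xs j) ∧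
      (∀ x : Fin p → ℝ, (∀ j, x j = 0 ∨ x j = 1) →
        (∀ i, ∑ j, A i j * x j ≤ (s i : ℝ)) →
        ∑ j, (v j) ^ 2 * x j ≤ ∑ j, (v j) ^ 2 * xs j) := by
  classical
  set ind : Finset (Fin p) → Fin p → ℝ := fun T j => if j ∈ T then 1 else 0 with hind
  set 𝒯 : Finset (Finset (Fin p)) :=
    univ.filter (fun T => ∀ i, ∑ j, A i j * ind T j ≤ (s i : ℝ)) with hTs
  have hempty : ∅ ∈ 𝒯 := by
    rw [hTs, mem_filter]
    refine ⟨mem_univ _, fun i => ?_⟩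
    have hz : ∑ j, A i j * ind ∅ j = 0 :=
      Finset.sum_eq_zero (fun j _ => by simp [hind])
    rw [hz]
    exact_mod_cast hs i
  obtain ⟨T0, hT0mem, hT0max⟩ :=
    Finset.exists_max_image 𝒯 (fun T => ∑ j, v j ^ 2 * ind T j) ⟨∅, hempty⟩
  have hT0feas : ∀ i, ∑ j, A i j * ind T0 j ≤ (s i : ℝ) := by
    rw [hTs, mem_filter] at hT0mem
    exact hT0mem.2
  have hbinopt : ∀ x : Fin p → ℝ, (∀ j, x j = 0 ∨ x j = 1) →
      (∀ i, ∑ j, A i j * x j ≤ (s i : ℝ)) →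
      ∑ j, v j ^ 2 * x j ≤ ∑ j, v j ^ 2 * ind T0 j := by
    intro x hbin hfeas
    have hxeq : ind (univ.filter (fun j => x j = 1)) = x := by
      funext j
      rw [hind]
      dsimp only
      rcases hbin j with h | h
      · rw [if_neg, h]
        simp [h]
      · rw [if_pos, h]
        simp [h]
    have hmem : univ.filter (fun j => x j = 1) ∈ 𝒯 := by
      rw [hTs, mem_filter]
      refine ⟨mem_univ _, ?_⟩
      rw [hxeq]
      exact hfeas
    have hle := hT0max _ hmem
    rw [hxeq] at hle
    exact hle
  refine ⟨ind T0, fun j => ?_, hT0feas, ?_, fun x hbin hfeas => hbinopt x hbin hfeas⟩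
  · rw [hind]
    dsimp only
    split
    · exact Or.inr rfl
    · exact Or.inl rfl
  · intro x hfeas hbox
    obtain ⟨y, hybin, hyfeas, hyobj⟩ := round_lemma g1 g2 h1 h2 v s A hA
      ((univ.filter (fun j => ¬ (x j = 0 ∨ x j = 1))).card
        + (univ.filter (fun i : Unit ⊕ Fin k1 ⊕ Fin k2 =>
            ∑ j, A i j * x j ≠ (s i : ℝ))).card) x le_rfl hfeas hbox
    exact le_trans hyobj (hbinopt y hybin hyfeas)
end

section
/- Let f(z) = ‖[Az − a]₊‖² + ‖Bz − b‖² where [·]₊ is the element-wise positive part, and suppose the minimum of f over the polyhedron Ω = {z : Cz ≤ c} equals 0. Then there exists λ > 0 such that for all z ∈ Ω, f(z) ≥ (λ/2)·‖z − P_{z*}(z)‖², where P_{z*}(z) is the Euclidean projection of z onto the solution set {z : Az ≤ a, Bz = b, Cz ≤ c}. -/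
/-- Hoffman-type error bound: if `f(z) = ‖[Az − a]₊‖² + ‖Bz − b‖²` has minimum value `0` over
`Ω = {z : Cz ≤ c}`, then there is `λ > 0` such that for every `z ∈ Ω`,
`f(z) ≥ (λ/2)‖z − P_{z*}(z)‖²`, where `P_{z*}(z)` is the nearest point to `z` in the solution
set `{Az ≤ a, Bz = b, Cz ≤ c}`. -/
theorem stmt10 {m1 m2 m3 n : ℕ}
    (A : Matrix (Fin m1) (Fin n) ℝ) (a : Fin m1 → ℝ)
    (B : Matrix (Fin m2) (Fin n) ℝ) (b : Fin m2 → ℝ)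
    (C : Matrix (Fin m3) (Fin n) ℝ) (c : Fin m3 → ℝ)
    (f : (Fin n → ℝ) → ℝ)
    (hf : ∀ z, f z = ∑ i, max (∑ j, A i j * z j - a i) 0 ^ 2 +
                     ∑ i, (∑ j, B i j * z j - b i) ^ 2)
    (hmin : ∃ z, (∀ i, ∑ j, C i j * z j ≤ c i) ∧ f z = 0) :
    ∃ lam : ℝ, 0 < lam ∧
      ∀ z : Fin n → ℝ, (∀ i, ∑ j, C i j * z j ≤ c i) →
        ∀ w : Fin n → ℝ,
          ((∀ i, ∑ j, A i j * w j ≤ a i) ∧ (∀ i, ∑ j, B i j * w j = b i) ∧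
            (∀ i, ∑ j, C i j * w j ≤ c i)) →
          (∀ u : Fin n → ℝ,
            ((∀ i, ∑ j, A i j * u j ≤ a i) ∧ (∀ i, ∑ j, B i j * u j = b i) ∧
              (∀ i, ∑ j, C i j * u j ≤ c i)) →
            ∑ j, (z j - w j) ^ 2 ≤ ∑ j, (z j - u j) ^ 2) →
          f z ≥ lam / 2 * ∑ j, (z j - w j) ^ 2 := by
  by_contra hcon
  push_neg at hcon
  classical
  -- extract a counterexample for each k
  have key : ∀ k : ℕ, ∃ z : Fin n → ℝ, (∀ i, ∑ j, C i j * z j ≤ c i) ∧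
      ∃ w : Fin n → ℝ, ((∀ i, ∑ j, A i j * w j ≤ a i) ∧ (∀ i, ∑ j, B i j * w j = b i) ∧
              (∀ i, ∑ j, C i j * w j ≤ c i)) ∧
        (∀ u : Fin n → ℝ,
            ((∀ i, ∑ j, A i j * u j ≤ a i) ∧ (∀ i, ∑ j, B i j * u j = b i) ∧
              (∀ i, ∑ j, C i j * u j ≤ c i)) →
            ∑ j, (z j - w j) ^ 2 ≤ ∑ j, (z j - u j) ^ 2) ∧
        f z < (((k : ℝ) + 1)⁻¹) / 2 * ∑ j, (z j - w j) ^ 2 :=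
    fun k => hcon (((k : ℝ) + 1)⁻¹) (by positivity)
  choose z hzΩ w hwS hnear hlt using key
  -- basic positivity of f
  have hf0 : ∀ v, 0 ≤ f v := by
    intro v
    rw [hf]
    have h1 : (0:ℝ) ≤ ∑ i, max (∑ j, A i j * v j - a i) 0 ^ 2 :=
      Finset.sum_nonneg fun i _ => sq_nonneg _
    have h2 : (0:ℝ) ≤ ∑ i, (∑ j, B i j * v j - b i) ^ 2 :=
      Finset.sum_nonneg fun i _ => sq_nonneg _
    linarith
  set D : ℕ → ℝ := fun k => ∑ j, (z k j - w k j) ^ 2 with hDdef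
  have hD0 : ∀ k, 0 < D k := by
    intro k
    have h1 : f (z k) < (((k : ℝ) + 1)⁻¹) / 2 * D k := hlt k
    have h2 := hf0 (z k)
    have h3 : (0:ℝ) < (((k : ℝ) + 1)⁻¹) / 2 := by positivity
    nlinarith [h1, h2, h3]
  set d : ℕ → ℝ := fun k => Real.sqrt (D k) with hddef
  have hd0 : ∀ k, 0 < d k := fun k => Real.sqrt_pos.mpr (hD0 k)
  have hd2 : ∀ k, d k ^ 2 = D k := fun k => Real.sq_sqrt (hD0 k).le
  set u : ℕ → Fin n → ℝ := fun k j => (z k j - w k j) / d k with hudef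
  have hzw : ∀ k j, z k j = w k j + d k * u k j := by
    intro k j
    have := (hd0 k).ne'
    have h2 : d k * ((z k j - w k j) / d k) = z k j - w k j := by field_simp
    simp only [hudef, h2]; ring
  have husq : ∀ k, ∑ j, u k j ^ 2 = 1 := by
    intro k
    have : ∑ j, u k j ^ 2 = (∑ j, (z k j - w k j) ^ 2) / d k ^ 2 := by
      rw [Finset.sum_div]
      exact Finset.sum_congr rfl fun j _ => by rw [div_pow]
    rw [this, hd2 k]
    exact div_self (hD0 k).ne'
  -- epsilon
  set ε : ℕ → ℝ := fun k => Real.sqrt ((((k : ℝ) + 1)⁻¹) / 2) with hεdef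
  have hε0 : ∀ k, 0 ≤ ε k := fun k => Real.sqrt_nonneg _
  have hε2 : ∀ k, ε k ^ 2 = (((k : ℝ) + 1)⁻¹) / 2 := fun k =>
    Real.sq_sqrt (by positivity)
  have hεlim : Filter.Tendsto ε Filter.atTop (nhds 0) := by
    have h1 : Filter.Tendsto (fun k : ℕ => (((k : ℝ) + 1)⁻¹) / 2) Filter.atTop (nhds 0) := by
      have := tendsto_one_div_add_atTop_nhds_zero_nat (𝕜 := ℝ)
      simpa [one_div] using this.div_const 2
    have h2 : Filter.Tendsto Real.sqrt (nhds 0) (nhds 0) := by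
      simpa using (Real.continuous_sqrt.tendsto 0)
    exact h2.comp h1
  have hflt : ∀ k, f (z k) < (ε k * d k) ^ 2 := by
    intro k
    have := hlt k
    calc f (z k) < (((k : ℝ) + 1)⁻¹) / 2 * D k := this
    _ = (ε k * d k) ^ 2 := by rw [mul_pow, hε2, hd2]
  -- row expansion
  have rowexp : ∀ (v : Fin n → ℝ) (k : ℕ),
      ∑ j, v j * z k j = ∑ j, v j * w k j + d k * ∑ j, v j * u k j := by
    intro v k
    rw [Finset.mul_sum, ← Finset.sum_add_distrib]
    exact Finset.sum_congr rfl fun j _ => by rw [hzw k j]; ring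
  -- single-term bounds from f
  have htermA : ∀ k i, max (∑ j, A i j * z k j - a i) 0 ^ 2 ≤ f (z k) := by
    intro k i
    rw [hf]
    have h1 : max (∑ j, A i j * z k j - a i) 0 ^ 2 ≤
        ∑ i, max (∑ j, A i j * z k j - a i) 0 ^ 2 :=
      Finset.single_le_sum (f := fun i => max (∑ j, A i j * z k j - a i) 0 ^ 2)
        (fun i _ => sq_nonneg _) (Finset.mem_univ i)
    have h2 : (0:ℝ) ≤ ∑ i, (∑ j, B i j * z k j - b i) ^ 2 :=
      Finset.sum_nonneg fun i _ => sq_nonneg _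
    linarith
  have htermB : ∀ k i, (∑ j, B i j * z k j - b i) ^ 2 ≤ f (z k) := by
    intro k i
    rw [hf]
    have h1 : (∑ j, B i j * z k j - b i) ^ 2 ≤ ∑ i, (∑ j, B i j * z k j - b i) ^ 2 :=
      Finset.single_le_sum (f := fun i => (∑ j, B i j * z k j - b i) ^ 2)
        (fun i _ => sq_nonneg _) (Finset.mem_univ i)
    have h2 : (0:ℝ) ≤ ∑ i, max (∑ j, A i j * z k j - a i) 0 ^ 2 :=
      Finset.sum_nonneg fun i _ => sq_nonneg _
    linarith
  -- rescaled residual bounds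
  have hA : ∀ k i, (∑ j, A i j * w k j - a i) + d k * ∑ j, A i j * u k j ≤ ε k * d k := by
    intro k i
    have h1 : max (∑ j, A i j * z k j - a i) 0 ^ 2 < (ε k * d k) ^ 2 :=
      lt_of_le_of_lt (htermA k i) (hflt k)
    have h2 : max (∑ j, A i j * z k j - a i) 0 < ε k * d k :=
      lt_of_pow_lt_pow_left₀ 2 (by positivity) h1
    have h3 : ∑ j, A i j * z k j - a i ≤ max (∑ j, A i j * z k j - a i) 0 := le_max_left _ _
    have h4 := rowexp (A i) k
    linarith
  have hB : ∀ k i, |∑ j, B i j * u k j| ≤ ε k := by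
    intro k i
    have h1 : (∑ j, B i j * z k j - b i) ^ 2 < (ε k * d k) ^ 2 :=
      lt_of_le_of_lt (htermB k i) (hflt k)
    have h2 : |∑ j, B i j * z k j - b i| < ε k * d k := by
      have := lt_of_pow_lt_pow_left₀ 2 (by positivity : (0:ℝ) ≤ ε k * d k)
        (by rwa [sq_abs] : |∑ j, B i j * z k j - b i| ^ 2 < (ε k * d k) ^ 2)
      exact this
    have h4 := rowexp (B i) k
    have h5 : ∑ j, B i j * w k j = b i := (hwS k).2.1 i
    have h6 : ∑ j, B i j * z k j - b i = d k * ∑ j, B i j * u k j := by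
      rw [h4, h5]; ring
    rw [h6, abs_mul, abs_of_pos (hd0 k)] at h2
    have := (hd0 k)
    nlinarith [abs_nonneg (∑ j, B i j * u k j)]
  have hC : ∀ k i, d k * ∑ j, C i j * u k j ≤ c i - ∑ j, C i j * w k j := by
    intro k i
    have h1 := hzΩ k i
    have h4 := rowexp (C i) k
    linarith
  -- ultrafilter and limit
  have : (Filter.atTop : Filter ℕ).NeBot := Filter.atTop_neBot
  set U : Ultrafilter ℕ := Ultrafilter.of Filter.atTop with hUdef
  have hUle : (U : Filter ℕ) ≤ Filter.atTop := Ultrafilter.of_le _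
  have humem : ∀ k j, u k j ∈ Set.Icc (-1 : ℝ) 1 := by
    intro k j
    have h1 : u k j ^ 2 ≤ 1 := by
      rw [← husq k]
      exact Finset.single_le_sum (f := fun j => u k j ^ 2)
        (fun j _ => sq_nonneg _) (Finset.mem_univ j)
    constructor <;> nlinarith
  have hcoord : ∀ j, ∃ x, x ∈ Set.Icc (-1:ℝ) 1 ∧
      Filter.Tendsto (fun k => u k j) U (nhds x) := by
    intro j
    have hle : ↑(U.map (fun k => u k j)) ≤ Filter.principal (Set.Icc (-1:ℝ) 1) := by
      rw [Filter.le_principal_iff, Ultrafilter.coe_map, Filter.mem_map]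
      exact Filter.univ_mem' fun k => humem k j
    obtain ⟨x, hx, hconv⟩ := (isCompact_Icc).ultrafilter_le_nhds (U.map fun k => u k j) hle
    exact ⟨x, hx, hconv⟩
  choose L hLmem hLtend using hcoord
  -- limits of rows
  have hrowtend : ∀ (v : Fin n → ℝ),
      Filter.Tendsto (fun k => ∑ j, v j * u k j) U (nhds (∑ j, v j * L j)) :=
    fun v => tendsto_finset_sum _ fun j _ => (hLtend j).const_mul (v j)
  have hεU : Filter.Tendsto ε U (nhds 0) := hεlim.mono_left hUle
  -- B L = 0
  have hBL : ∀ i, ∑ j, B i j * L j = 0 := by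
    intro i
    have h1 : Filter.Tendsto (fun k => |∑ j, B i j * u k j|) U
        (nhds (|∑ j, B i j * L j|)) := (hrowtend (B i)).abs
    have h2 : |∑ j, B i j * L j| ≤ 0 :=
      le_of_tendsto_of_tendsto' h1 hεU fun k => hB k i
    exact abs_nonpos_iff.mp h2
  -- sum of squares of L is 1
  have hLsq : ∑ j, L j ^ 2 = 1 := by
    have h1 : Filter.Tendsto (fun k => ∑ j, u k j ^ 2) U (nhds (∑ j, L j ^ 2)) :=
      tendsto_finset_sum _ fun j _ => (hLtend j).pow 2
    have h2 : Filter.Tendsto (fun _ : ℕ => (1:ℝ)) U (nhds 1) := tendsto_const_nhds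
    have h3 : (fun k => ∑ j, u k j ^ 2) = fun _ : ℕ => (1:ℝ) := funext husq
    rw [h3] at h1
    exact tendsto_nhds_unique h1 h2
  -- eventual feasibility of the competitor point, per row
  have E1 : ∀ i, ∀ᶠ k in (U : Filter ℕ),
      (∑ j, A i j * w k j) + d k / 2 * ∑ j, A i j * L j ≤ a i := by
    intro i
    set α := ∑ j, A i j * L j with hα
    by_cases hα0 : α ≤ 0
    · refine Filter.Eventually.of_forall fun k => ?_
      have h1 := (hwS k).1 i
      have h2 : d k / 2 * α ≤ 0 := mul_nonpos_of_nonneg_of_nonpos (by positivity) hα0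
      linarith
    · push_neg at hα0
      have hlim : Filter.Tendsto (fun k => ε k - ∑ j, A i j * u k j) U (nhds (0 - α)) :=
        hεU.sub (hrowtend (A i))
      have hev : ∀ᶠ k in (U : Filter ℕ), ε k - ∑ j, A i j * u k j < -α / 2 :=
        hlim.eventually_lt_const (by linarith)
      filter_upwards [hev] with k hk
      have h1 := hA k i
      have h2 : (∑ j, A i j * w k j - a i) ≤ d k * (ε k - ∑ j, A i j * u k j) := by
        nlinarith [hd0 k]
      have h3 : d k * (ε k - ∑ j, A i j * u k j) < d k * (-α / 2) :=
        mul_lt_mul_of_pos_left hk (hd0 k)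
      nlinarith
  have E2 : ∀ i, ∀ᶠ k in (U : Filter ℕ),
      (∑ j, C i j * w k j) + d k / 2 * ∑ j, C i j * L j ≤ c i := by
    intro i
    set γ := ∑ j, C i j * L j with hγ
    by_cases hγ0 : γ ≤ 0
    · refine Filter.Eventually.of_forall fun k => ?_
      have h1 := hzΩ k i
      have h2 : d k / 2 * γ ≤ 0 := mul_nonpos_of_nonneg_of_nonpos (by positivity) hγ0
      have h3 := (hwS k).2.2 i
      linarith
    · push_neg at hγ0
      have hev : ∀ᶠ k in (U : Filter ℕ), γ / 2 < ∑ j, C i j * u k j :=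
        (hrowtend (C i)).eventually_const_lt (by linarith)
      filter_upwards [hev] with k hk
      have h1 := hC k i
      have h3 : d k * (γ / 2) < d k * ∑ j, C i j * u k j :=
        mul_lt_mul_of_pos_left hk (hd0 k)
      nlinarith
  have E3 : ∀ᶠ k in (U : Filter ℕ), ∑ j, (u k j - L j / 2) ^ 2 < 1 := by
    have h1 : Filter.Tendsto (fun k => ∑ j, (u k j - L j / 2) ^ 2) U
        (nhds (∑ j, (L j - L j / 2) ^ 2)) :=
      tendsto_finset_sum _ fun j _ => ((hLtend j).sub_const (L j / 2)).pow 2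
    have h2 : ∑ j, (L j - L j / 2) ^ 2 = 1 / 4 := by
      have : ∀ j, (L j - L j / 2) ^ 2 = L j ^ 2 / 4 := fun j => by ring
      rw [Finset.sum_congr rfl fun j _ => this j, ← Finset.sum_div, hLsq]
    rw [h2] at h1
    exact h1.eventually_lt_const (by norm_num)
  have Eall : ∀ᶠ k in (U : Filter ℕ),
      (∀ i, (∑ j, A i j * w k j) + d k / 2 * ∑ j, A i j * L j ≤ a i) ∧
      (∀ i, (∑ j, C i j * w k j) + d k / 2 * ∑ j, C i j * L j ≤ c i) ∧
      ∑ j, (u k j - L j / 2) ^ 2 < 1 :=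
    (Filter.eventually_all.mpr E1).and ((Filter.eventually_all.mpr E2).and E3)
  obtain ⟨k, hk1, hk2, hk3⟩ := Eall.exists
  -- competitor point
  set s : Fin n → ℝ := fun j => w k j + d k / 2 * L j with hsdef
  have hrows : ∀ (v : Fin n → ℝ),
      ∑ j, v j * s j = ∑ j, v j * w k j + d k / 2 * ∑ j, v j * L j := by
    intro v
    rw [Finset.mul_sum, ← Finset.sum_add_distrib]
    exact Finset.sum_congr rfl fun j _ => by simp only [hsdef]; ring
  have hsS : (∀ i, ∑ j, A i j * s j ≤ a i) ∧ (∀ i, ∑ j, B i j * s j = b i) ∧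
      (∀ i, ∑ j, C i j * s j ≤ c i) := by
    refine ⟨fun i => ?_, fun i => ?_, fun i => ?_⟩
    · rw [hrows (A i)]; exact hk1 i
    · rw [hrows (B i), (hwS k).2.1 i, hBL i]; ring
    · rw [hrows (C i)]; exact hk2 i
  have hmin' := hnear k s hsS
  have hcomp : ∑ j, (z k j - s j) ^ 2 = d k ^ 2 * ∑ j, (u k j - L j / 2) ^ 2 := by
    rw [Finset.mul_sum]
    exact Finset.sum_congr rfl fun j _ => by rw [hzw k j]; simp only [hsdef]; ring
  have hlt2 : ∑ j, (z k j - s j) ^ 2 < D k := by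
    rw [hcomp, ← hd2 k]
    have := hd2 k
    nlinarith [hD0 k, hk3, sq_nonneg (d k)]
  have : D k ≤ ∑ j, (z k j - s j) ^ 2 := hmin'
  linarith
end

section
/- Let f(z) = ‖[Az − a]₊‖² + ‖Bz − b‖² with min over Ω = {z : Cz ≤ c} equal to 0, let L be the Lipschitz constant of ∇f, and suppose the error bound f(z) ≥ (λ/2)‖z − P_{z*}(z)‖² holds on Ω for some λ > 0. Then projected gradient descent z^{t+1} = P_Ω(z^t − (1/L)∇f(z^t)) satisfies ‖z^{t+1} − P_{z*}(z^{t+1})‖² ≤ (1/(1 + λ/L))·‖z^t − P_{z*}(z^t)‖², i.e., the distance to the optimal set converges linearly. -/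
open Asymptotics Finset

lemma maxsq_key (s t : ℝ) : |max t 0 ^2 - max s 0 ^2 - (t - s) * (2 * max s 0)| ≤ (t-s)^2 := by
  rw [abs_le]
  rcases le_or_gt t 0 with ht | ht <;> rcases le_or_gt s 0 with hs | hs
  · rw [max_eq_right ht, max_eq_right hs]; constructor <;> nlinarith [sq_nonneg (t-s)]
  · rw [max_eq_right ht, max_eq_left hs.le]; constructor <;> nlinarith [sq_nonneg (t-s), sq_nonneg t]
  · rw [max_eq_left ht.le, max_eq_right hs]; constructor <;> nlinarith [sq_nonneg (t-s), sq_nonneg s, mul_nonneg ht.le (neg_nonneg.2 hs)]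
  · rw [max_eq_left ht.le, max_eq_left hs.le]; constructor <;> nlinarith [sq_nonneg (t-s)]

lemma maxsq_deriv (s : ℝ) : HasDerivAt (fun t : ℝ => max t 0 ^ 2) (2 * max s 0) s := by
  rw [hasDerivAt_iff_isLittleO]
  have h1 : (fun t:ℝ => max t 0 ^ 2 - max s 0 ^2 - (t - s) • (2 * max s 0)) =O[nhds s] (fun t => (t-s)^2) := by
    apply IsBigO.of_bound 1
    filter_upwards with t
    simpa [abs_pow, sq_abs] using maxsq_key s t
  have h2 : (fun t:ℝ => (t-s)^2) =o[nhds s] fun t => t - s := by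
    have h0 := Asymptotics.isLittleO_pow_sub_sub (E' := ℝ) s (m := 2) (by norm_num)
    have h3 : (fun t:ℝ => (t-s)^2) =O[nhds s] (fun t:ℝ => ‖t - s‖^2) :=
      IsBigO.of_bound 1 (by filter_upwards with t; simp [abs_pow, sq_abs])
    exact h3.trans_isLittleO h0
  exact h1.trans_isLittleO h2

lemma maxsq_convex (s t : ℝ) : max s 0 ^2 + 2 * (max s 0 * (t - s)) ≤ max t 0 ^2 := by
  rcases le_or_gt t 0 with ht | ht <;> rcases le_or_gt s 0 with hs | hs
  · rw [max_eq_right ht, max_eq_right hs]; nlinarith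
  · rw [max_eq_right ht, max_eq_left hs.le]; nlinarith [sq_nonneg s]
  · rw [max_eq_left ht.le, max_eq_right hs]; nlinarith [sq_nonneg t]
  · rw [max_eq_left ht.le, max_eq_left hs.le]; nlinarith [sq_nonneg (t-s)]

lemma swap_helper {m n : ℕ} (M : Matrix (Fin m) (Fin n) ℝ) (w : Fin m → ℝ) (d : Fin n → ℝ) :
    ∑ k, (∑ i, M i k * w i) * d k = ∑ i, w i * (∑ k, M i k * d k) := by
  simp_rw [Finset.sum_mul, Finset.mul_sum]
  rw [Finset.sum_comm]
  exact Finset.sum_congr rfl fun i _ => Finset.sum_congr rfl fun k _ => by ring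

lemma inner_grad {m1 m2 n : ℕ} (A : Matrix (Fin m1) (Fin n) ℝ) (a : Fin m1 → ℝ)
    (B : Matrix (Fin m2) (Fin n) ℝ) (b : Fin m2 → ℝ)
    (gradf : (Fin n → ℝ) → (Fin n → ℝ))
    (hgradf : ∀ z k, gradf z k = 2 * ∑ i, A i k * max (∑ j, A i j * z j - a i) 0 +
        2 * ∑ i, B i k * (∑ j, B i j * z j - b i))
    (x d : Fin n → ℝ) :
    ∑ k, gradf x k * d k =
      2 * ∑ i, max (∑ j, A i j * x j - a i) 0 * (∑ k, A i k * d k) +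
      2 * ∑ i, (∑ j, B i j * x j - b i) * (∑ k, B i k * d k) := by
  simp_rw [hgradf]
  have h1 : ∀ k ∈ Finset.univ (α := Fin n),
      (2 * ∑ i, A i k * max (∑ j, A i j * x j - a i) 0 + 2 * ∑ i, B i k * (∑ j, B i j * x j - b i)) * d k
      = 2 * ((∑ i, A i k * max (∑ j, A i j * x j - a i) 0) * d k)
        + 2 * ((∑ i, B i k * (∑ j, B i j * x j - b i)) * d k) := fun k _ => by ring
  rw [Finset.sum_congr rfl h1, Finset.sum_add_distrib, ← Finset.mul_sum, ← Finset.mul_sum,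
    swap_helper A _ d, swap_helper B _ d]

lemma conv_ineq {m1 m2 n : ℕ} (A : Matrix (Fin m1) (Fin n) ℝ) (a : Fin m1 → ℝ)
    (B : Matrix (Fin m2) (Fin n) ℝ) (b : Fin m2 → ℝ)
    (f : (Fin n → ℝ) → ℝ)
    (hf : ∀ z, f z = ∑ i, max (∑ j, A i j * z j - a i) 0 ^ 2 +
                     ∑ i, (∑ j, B i j * z j - b i) ^ 2)
    (gradf : (Fin n → ℝ) → (Fin n → ℝ))
    (hgradf : ∀ z k, gradf z k = 2 * ∑ i, A i k * max (∑ j, A i j * z j - a i) 0 +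
        2 * ∑ i, B i k * (∑ j, B i j * z j - b i))
    (x y : Fin n → ℝ) :
    f x + ∑ k, gradf x k * (y k - x k) ≤ f y := by
  rw [hf x, hf y, inner_grad A a B b gradf hgradf x (fun k => y k - x k)]
  have hAd : ∀ i, ∑ k, A i k * (y k - x k)
      = (∑ j, A i j * y j - a i) - (∑ j, A i j * x j - a i) := by
    intro i; simp_rw [mul_sub]; rw [Finset.sum_sub_distrib]; ring
  have hBd : ∀ i, ∑ k, B i k * (y k - x k)
      = (∑ j, B i j * y j - b i) - (∑ j, B i j * x j - b i) := by
    intro i; simp_rw [mul_sub]; rw [Finset.sum_sub_distrib]; ring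
  simp_rw [hAd, hBd]
  have key1 : ∑ i, (max (∑ j, A i j * x j - a i) 0 ^2
      + 2 * (max (∑ j, A i j * x j - a i) 0 * ((∑ j, A i j * y j - a i) - (∑ j, A i j * x j - a i))))
      ≤ ∑ i, max (∑ j, A i j * y j - a i) 0^2 :=
    Finset.sum_le_sum fun i _ => maxsq_convex _ _
  have key2 : ∑ i, ((∑ j, B i j * x j - b i)^2
      + 2 * ((∑ j, B i j * x j - b i) * ((∑ j, B i j * y j - b i) - (∑ j, B i j * x j - b i))))
      ≤ ∑ i, (∑ j, B i j * y j - b i)^2 :=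
    Finset.sum_le_sum fun i _ => by nlinarith [sq_nonneg ((∑ j, B i j * y j - b i) - (∑ j, B i j * x j - b i))]
  rw [Finset.sum_add_distrib, ← Finset.mul_sum] at key1 key2
  linarith
section
variable {m1 m2 n : ℕ}

lemma descent_lemma (A : Matrix (Fin m1) (Fin n) ℝ) (a : Fin m1 → ℝ)
    (B : Matrix (Fin m2) (Fin n) ℝ) (b : Fin m2 → ℝ)
    (f : (Fin n → ℝ) → ℝ)
    (hf : ∀ z, f z = ∑ i, max (∑ j, A i j * z j - a i) 0 ^ 2 +
                     ∑ i, (∑ j, B i j * z j - b i) ^ 2)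
    (gradf : (Fin n → ℝ) → (Fin n → ℝ))
    (hgradf : ∀ z k, gradf z k = 2 * ∑ i, A i k * max (∑ j, A i j * z j - a i) 0 +
        2 * ∑ i, B i k * (∑ j, B i j * z j - b i))
    (L : ℝ) (hL : 0 < L)
    (hLip : ∀ z w : Fin n → ℝ,
      ∑ k, (gradf z k - gradf w k) ^ 2 ≤ L ^ 2 * ∑ k, (z k - w k) ^ 2)
    (x y : Fin n → ℝ) :
    f y ≤ f x + ∑ k, gradf x k * (y k - x k) + L/2 * ∑ k, (y k - x k)^2 := by
  set d : Fin n → ℝ := fun k => y k - x k with hd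
  set S : ℝ := ∑ k, d k ^ 2 with hS
  set z : ℝ → (Fin n → ℝ) := fun t k => x k + t * d k with hz
  set h : ℝ → ℝ := fun t => f (z t) with hh
  set h' : ℝ → ℝ := fun t => ∑ k, gradf (z t) k * d k with hh'
  have hz0 : z 0 = x := by funext k; simp [hz]
  have hz1 : z 1 = y := by funext k; simp [hz, hd]
  have hSnn : 0 ≤ S := Finset.sum_nonneg fun k _ => sq_nonneg _
  have hrA : ∀ (i : Fin m1) (t : ℝ), ∑ j, A i j * z t j - a i
      = (∑ j, A i j * d j) * t + (∑ j, A i j * x j - a i) := by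
    intro i t
    simp only [hz]
    simp_rw [mul_add, Finset.sum_add_distrib, Finset.sum_mul]
    rw [Finset.sum_congr rfl (fun j _ => by ring : ∀ j ∈ Finset.univ, A i j * (t * d j) = A i j * d j * t)]
    ring
  have hrB : ∀ (i : Fin m2) (t : ℝ), ∑ j, B i j * z t j - b i
      = (∑ j, B i j * d j) * t + (∑ j, B i j * x j - b i) := by
    intro i t
    simp only [hz]
    simp_rw [mul_add, Finset.sum_add_distrib, Finset.sum_mul]
    rw [Finset.sum_congr rfl (fun j _ => by ring : ∀ j ∈ Finset.univ, B i j * (t * d j) = B i j * d j * t)]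
    ring
  have hderivA : ∀ (t : ℝ) (i : Fin m1), HasDerivAt
      (fun s : ℝ => max ((∑ j, A i j * d j) * s + (∑ j, A i j * x j - a i)) 0 ^ 2)
      (2 * max ((∑ j, A i j * d j) * t + (∑ j, A i j * x j - a i)) 0 * (∑ j, A i j * d j)) t := by
    intro t i
    have hlin : HasDerivAt (fun s : ℝ => (∑ j, A i j * d j) * s + (∑ j, A i j * x j - a i))
        (∑ j, A i j * d j) t := by
      simpa using ((hasDerivAt_id t).const_mul (∑ j, A i j * d j)).add_const (∑ j, A i j * x j - a i)
    exact (maxsq_deriv _).comp t hlin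
  have hderivB : ∀ (t : ℝ) (i : Fin m2), HasDerivAt
      (fun s : ℝ => ((∑ j, B i j * d j) * s + (∑ j, B i j * x j - b i)) ^ 2)
      (2 * ((∑ j, B i j * d j) * t + (∑ j, B i j * x j - b i)) * (∑ j, B i j * d j)) t := by
    intro t i
    have hlin : HasDerivAt (fun s : ℝ => (∑ j, B i j * d j) * s + (∑ j, B i j * x j - b i))
        (∑ j, B i j * d j) t := by
      simpa using ((hasDerivAt_id t).const_mul (∑ j, B i j * d j)).add_const (∑ j, B i j * x j - b i)
    have h2 := hlin.pow 2
    norm_num at h2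
    exact h2
  have hderiv : ∀ t : ℝ, HasDerivAt h (h' t) t := by
    intro t
    have hsum := (HasDerivAt.fun_sum (u := Finset.univ) (fun i _ => hderivA t i)).add
                 (HasDerivAt.fun_sum (u := Finset.univ) (fun i _ => hderivB t i))
    have hfun : (fun s : ℝ => (∑ i, max ((∑ j, A i j * d j) * s + (∑ j, A i j * x j - a i)) 0 ^ 2) +
        ∑ i, ((∑ j, B i j * d j) * s + (∑ j, B i j * x j - b i)) ^ 2) = h := by
      funext s
      rw [hh]
      simp only [hf (z s)]
      congr 1
      · exact Finset.sum_congr rfl fun i _ => by rw [hrA i s]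
      · exact Finset.sum_congr rfl fun i _ => by rw [hrB i s]
    have hval : (∑ i, 2 * max ((∑ j, A i j * d j) * t + (∑ j, A i j * x j - a i)) 0 * (∑ j, A i j * d j)) +
        ∑ i, 2 * ((∑ j, B i j * d j) * t + (∑ j, B i j * x j - b i)) * (∑ j, B i j * d j) = h' t := by
      rw [hh']
      simp only
      rw [inner_grad A a B b gradf hgradf (z t) d]
      simp_rw [hrA, hrB]
      rw [Finset.mul_sum, Finset.mul_sum]
      congr 1
      · exact Finset.sum_congr rfl fun i _ => by ring
      · exact Finset.sum_congr rfl fun i _ => by ring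
    exact hfun ▸ hval ▸ hsum
  have hslope : ∀ t : ℝ, 0 ≤ t → h' t ≤ h' 0 + L * S * t := by
    intro t ht
    have hdiff : h' t - h' 0 = ∑ k, (gradf (z t) k - gradf (z 0) k) * d k := by
      rw [hh']
      simp only
      rw [← Finset.sum_sub_distrib]
      exact Finset.sum_congr rfl fun k _ => by ring
    have hcs := Finset.sum_mul_sq_le_sq_mul_sq Finset.univ (fun k => gradf (z t) k - gradf (z 0) k) d
    have hlip := hLip (z t) (z 0)
    have hzz : ∑ k, (z t k - z 0 k) ^ 2 = t ^ 2 * S := by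
      rw [hS, Finset.mul_sum]
      exact Finset.sum_congr rfl fun k _ => by simp only [hz]; ring
    rw [hzz] at hlip
    have h2 : (h' t - h' 0) ^ 2 ≤ (L * S * t) ^ 2 := by
      rw [hdiff]
      calc (∑ k, (gradf (z t) k - gradf (z 0) k) * d k) ^ 2
          ≤ (∑ k, (gradf (z t) k - gradf (z 0) k) ^ 2) * S := hcs
        _ ≤ (L ^ 2 * (t ^ 2 * S)) * S := mul_le_mul_of_nonneg_right hlip hSnn
        _ = (L * S * t) ^ 2 := by ring
    have hY : 0 ≤ L * S * t := mul_nonneg (mul_nonneg hL.le hSnn) ht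
    nlinarith [h2, hY]
  set F : ℝ → ℝ := fun t => h 0 + h' 0 * t + L / 2 * S * t ^ 2 - h t with hFdef
  have hF : ∀ t : ℝ, HasDerivAt F (h' 0 + L * S * t - h' t) t := by
    intro t
    have d1 : HasDerivAt (fun t : ℝ => h' 0 * t) (h' 0) t := by
      simpa using (hasDerivAt_id t).const_mul (h' 0)
    have d2 : HasDerivAt (fun t : ℝ => L / 2 * S * t ^ 2) (L * S * t) t := by
      have := (hasDerivAt_pow 2 t).const_mul (L / 2 * S)
      norm_num at this
      refine this.congr_deriv ?_
      ring
    exact (((d1.const_add (h 0)).add d2).sub (hderiv t))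
  have hmono : MonotoneOn F (Set.Ici (0:ℝ)) := by
    apply monotoneOn_of_deriv_nonneg (convex_Ici 0)
    · exact fun t _ => (hF t).differentiableAt.continuousAt.continuousWithinAt
    · exact fun t _ => (hF t).differentiableAt.differentiableWithinAt
    · intro t ht
      rw [interior_Ici] at ht
      rw [(hF t).deriv]
      have := hslope t (le_of_lt ht)
      linarith
  have h01 := hmono Set.self_mem_Ici (Set.mem_Ici.2 zero_le_one) zero_le_one
  have hF0 : F 0 = 0 := by rw [hFdef]; simp
  have hF1 : F 1 = h 0 + h' 0 + L / 2 * S - h 1 := by rw [hFdef]; simp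
  have hh0 : h 0 = f x := by rw [hh]; simp only; rw [hz0]
  have hh1 : h 1 = f y := by rw [hh]; simp only; rw [hz1]
  have hh'0 : h' 0 = ∑ k, gradf x k * (y k - x k) := by
    rw [hh']
    simp only
    rw [hz0]
  rw [hF0, hF1, hh0, hh1, hh'0] at h01
  rw [hS, hd] at h01
  linarith [h01]
end
section
variable {m3 n : ℕ}

lemma proj_vi (C : Matrix (Fin m3) (Fin n) ℝ) (c : Fin m3 → ℝ)
    (p zt1 : Fin n → ℝ)
    (hzt1Ω : ∀ i, ∑ j, C i j * zt1 j ≤ c i)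
    (hproj : ∀ u : Fin n → ℝ, (∀ i, ∑ j, C i j * u j ≤ c i) →
        ∑ j, (zt1 j - p j) ^ 2 ≤ ∑ j, (u j - p j) ^ 2)
    (u : Fin n → ℝ) (hu : ∀ i, ∑ j, C i j * u j ≤ c i) :
    0 ≤ ∑ j, (zt1 j - p j) * (u j - zt1 j) := by
  set I : ℝ := ∑ j, (zt1 j - p j) * (u j - zt1 j) with hI
  set S : ℝ := ∑ j, (u j - zt1 j) ^ 2 with hSd
  have hSnn : 0 ≤ S := Finset.sum_nonneg fun _ _ => sq_nonneg _
  have key : ∀ θ : ℝ, 0 < θ → θ ≤ 1 → 0 ≤ 2 * I + θ * S := by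
    intro θ h0 h1
    have hmem : ∀ i, ∑ j, C i j * (zt1 j + θ * (u j - zt1 j)) ≤ c i := by
      intro i
      have expand : ∑ j, C i j * (zt1 j + θ * (u j - zt1 j))
          = (1 - θ) * (∑ j, C i j * zt1 j) + θ * (∑ j, C i j * u j) := by
        rw [Finset.mul_sum, Finset.mul_sum, ← Finset.sum_add_distrib]
        exact Finset.sum_congr rfl fun j _ => by ring
      rw [expand]
      calc (1 - θ) * (∑ j, C i j * zt1 j) + θ * (∑ j, C i j * u j)
          ≤ (1 - θ) * c i + θ * c i :=
            add_le_add (mul_le_mul_of_nonneg_left (hzt1Ω i) (by linarith))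
              (mul_le_mul_of_nonneg_left (hu i) h0.le)
        _ = c i := by ring
    have hp := hproj _ hmem
    have expand2 : ∑ j, (zt1 j + θ * (u j - zt1 j) - p j) ^ 2
        = (∑ j, (zt1 j - p j) ^ 2) + θ * (2 * I) + θ ^ 2 * S := by
      rw [hI, hSd]
      simp only [Finset.mul_sum, ← Finset.sum_add_distrib]
      exact Finset.sum_congr rfl fun j _ => by ring
    rw [expand2] at hp
    nlinarith [hp, h0]
  by_contra hneg
  push_neg at hneg
  have hIneg : I < 0 := hneg
  set q : ℝ := -I / (S + 1) with hqdef
  have hqpos : 0 < q := div_pos (by linarith) (by linarith)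
  have hq : q * (S + 1) = -I := by rw [hqdef]; field_simp
  set θ0 : ℝ := min 1 q with hθ0
  have hθ0pos : 0 < θ0 := lt_min one_pos hqpos
  have hθ0le : θ0 ≤ 1 := min_le_left _ _
  have hprod : θ0 * S ≤ q * S := mul_le_mul_of_nonneg_right (min_le_right _ _) hSnn
  have hkey := key θ0 hθ0pos hθ0le
  linarith
end
/-- Linear convergence of projected gradient descent for
`f(z) = ‖[Az − a]₊‖² + ‖Bz − b‖²` over `Ω = {z : Cz ≤ c}` with minimum value `0`:
one step `z⁺ = P_Ω(z − (1/L)∇f(z))` contracts the squared distance to the optimal set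
by the factor `1/(1 + λ/L)`, where `λ` comes from the Hoffman error bound. -/
theorem stmt11 {m1 m2 m3 n : ℕ}
    (A : Matrix (Fin m1) (Fin n) ℝ) (a : Fin m1 → ℝ)
    (B : Matrix (Fin m2) (Fin n) ℝ) (b : Fin m2 → ℝ)
    (C : Matrix (Fin m3) (Fin n) ℝ) (c : Fin m3 → ℝ)
    (f : (Fin n → ℝ) → ℝ)
    (hf : ∀ z, f z = ∑ i, max (∑ j, A i j * z j - a i) 0 ^ 2 +
                     ∑ i, (∑ j, B i j * z j - b i) ^ 2)
    (gradf : (Fin n → ℝ) → (Fin n → ℝ))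
    (hgradf : ∀ z k, gradf z k =
        2 * ∑ i, A i k * max (∑ j, A i j * z j - a i) 0 +
        2 * ∑ i, B i k * (∑ j, B i j * z j - b i))
    (L lam : ℝ) (hL : 0 < L) (hlam : 0 < lam)
    -- L-Lipschitz continuity of the gradient
    (hLip : ∀ z w : Fin n → ℝ,
      ∑ k, (gradf z k - gradf w k) ^ 2 ≤ L ^ 2 * ∑ k, (z k - w k) ^ 2)
    -- minimum of f over Ω is zero
    (hmin : ∃ z, (∀ i, ∑ j, C i j * z j ≤ c i) ∧ f z = 0)
    -- error bound on Ω: f(z) ≥ (λ/2)‖z − P_{z*}(z)‖²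
    (herr : ∀ z : Fin n → ℝ, (∀ i, ∑ j, C i j * z j ≤ c i) →
      ∀ w : Fin n → ℝ,
        ((∀ i, ∑ j, A i j * w j ≤ a i) ∧ (∀ i, ∑ j, B i j * w j = b i) ∧
          (∀ i, ∑ j, C i j * w j ≤ c i)) →
        (∀ u : Fin n → ℝ,
          ((∀ i, ∑ j, A i j * u j ≤ a i) ∧ (∀ i, ∑ j, B i j * u j = b i) ∧
            (∀ i, ∑ j, C i j * u j ≤ c i)) →
          ∑ j, (z j - w j) ^ 2 ≤ ∑ j, (z j - u j) ^ 2) →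
        f z ≥ lam / 2 * ∑ j, (z j - w j) ^ 2)
    (zt zt1 : Fin n → ℝ)
    (hzt : ∀ i, ∑ j, C i j * zt j ≤ c i)
    -- zt1 is the projection of zt − (1/L)∇f(zt) onto Ω
    (hzt1 : (∀ i, ∑ j, C i j * zt1 j ≤ c i) ∧
      ∀ u : Fin n → ℝ, (∀ i, ∑ j, C i j * u j ≤ c i) →
        ∑ j, (zt1 j - (zt j - (1 / L) * gradf zt j)) ^ 2 ≤
          ∑ j, (u j - (zt j - (1 / L) * gradf zt j)) ^ 2)
    (w0 w1 : Fin n → ℝ)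
    -- w0 is the nearest point to zt in the solution set
    (hw0 : ((∀ i, ∑ j, A i j * w0 j ≤ a i) ∧ (∀ i, ∑ j, B i j * w0 j = b i) ∧
        (∀ i, ∑ j, C i j * w0 j ≤ c i)) ∧
      ∀ u : Fin n → ℝ,
        ((∀ i, ∑ j, A i j * u j ≤ a i) ∧ (∀ i, ∑ j, B i j * u j = b i) ∧
          (∀ i, ∑ j, C i j * u j ≤ c i)) →
        ∑ j, (zt j - w0 j) ^ 2 ≤ ∑ j, (zt j - u j) ^ 2)
    -- w1 is the nearest point to zt1 in the solution set
    (hw1 : ((∀ i, ∑ j, A i j * w1 j ≤ a i) ∧ (∀ i, ∑ j, B i j * w1 j = b i) ∧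
        (∀ i, ∑ j, C i j * w1 j ≤ c i)) ∧
      ∀ u : Fin n → ℝ,
        ((∀ i, ∑ j, A i j * u j ≤ a i) ∧ (∀ i, ∑ j, B i j * u j = b i) ∧
          (∀ i, ∑ j, C i j * u j ≤ c i)) →
        ∑ j, (zt1 j - w1 j) ^ 2 ≤ ∑ j, (zt1 j - u j) ^ 2) :
    ∑ j, (zt1 j - w1 j) ^ 2 ≤ (1 / (1 + lam / L)) * ∑ j, (zt j - w0 j) ^ 2 := by

  -- f vanishes on the solution set
  have hfw0 : f w0 = 0 := by
    rw [hf]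
    have e1 : ∀ i ∈ Finset.univ, max (∑ j, A i j * w0 j - a i) 0 ^ 2 = (0:ℝ) := fun i _ => by
      rw [max_eq_right (by linarith [hw0.1.1 i])]
      norm_num
    have e2 : ∀ i ∈ Finset.univ, (∑ j, B i j * w0 j - b i) ^ 2 = (0:ℝ) := fun i _ => by
      rw [hw0.1.2.1 i]
      norm_num
    rw [Finset.sum_congr rfl e1, Finset.sum_congr rfl e2]
    simp
  have h1 := conv_ineq A a B b f hf gradf hgradf zt w0
  rw [hfw0] at h1
  have h2 := descent_lemma A a B b f hf gradf hgradf L hL hLip zt zt1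
  have hVI : 0 ≤ ∑ j, (zt1 j - (zt j - 1 / L * gradf zt j)) * (w0 j - zt1 j) := by
    have := proj_vi C c (fun j => zt j - 1 / L * gradf zt j) zt1 hzt1.1
      (fun u hu => by simpa using hzt1.2 u hu) w0 hw0.1.2.2
    simpa using this
  have h4 := herr zt1 hzt1.1 w1 hw1.1 hw1.2
  have h5 := hw1.2 w0 hw0.1
  -- sum identities
  have idG : ∑ k, gradf zt k * (w0 k - zt1 k)
      = (∑ k, gradf zt k * (w0 k - zt k)) - ∑ k, gradf zt k * (zt1 k - zt k) := by
    rw [← Finset.sum_sub_distrib]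
    exact Finset.sum_congr rfl fun k _ => by ring
  have idVI : ∑ j, (zt1 j - (zt j - 1 / L * gradf zt j)) * (w0 j - zt1 j)
      = ((∑ j, (zt j - w0 j) ^ 2) - (∑ j, (zt1 j - zt j) ^ 2) - ∑ j, (zt1 j - w0 j) ^ 2) / 2
        + 1 / L * ∑ k, gradf zt k * (w0 k - zt1 k) := by
    have e : ∀ j ∈ Finset.univ, (zt1 j - (zt j - 1 / L * gradf zt j)) * (w0 j - zt1 j)
        = ((zt j - w0 j) ^ 2 - (zt1 j - zt j) ^ 2 - (zt1 j - w0 j) ^ 2) / 2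
          + 1 / L * (gradf zt j * (w0 j - zt1 j)) := fun j _ => by ring
    rw [Finset.sum_congr rfl e, Finset.sum_add_distrib, ← Finset.mul_sum, ← Finset.sum_div,
      Finset.sum_sub_distrib, Finset.sum_sub_distrib]
  rw [idVI] at hVI
  -- abbreviations
  set P : ℝ := ∑ k, gradf zt k * (w0 k - zt k) with hP
  set Q : ℝ := ∑ k, gradf zt k * (zt1 k - zt k) with hQ
  set G : ℝ := ∑ k, gradf zt k * (w0 k - zt1 k) with hG
  set D0 : ℝ := ∑ j, (zt j - w0 j) ^ 2 with hD0
  set D1 : ℝ := ∑ j, (zt1 j - zt j) ^ 2 with hD1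
  set E0 : ℝ := ∑ j, (zt1 j - w0 j) ^ 2 with hE0
  set E1 : ℝ := ∑ j, (zt1 j - w1 j) ^ 2 with hE1
  have hE1nn : 0 ≤ E1 := Finset.sum_nonneg fun _ _ => sq_nonneg _
  -- clear denominators in hVI
  have hVI' : 0 ≤ L * ((D0 - D1 - E0) / 2) + G := by
    have e : L * ((D0 - D1 - E0) / 2 + 1 / L * G) = L * ((D0 - D1 - E0) / 2) + G := by
      field_simp
    rw [← e]
    exact mul_nonneg hL.le hVI
  have k1 : f zt1 ≤ L / 2 * D0 - L / 2 * E0 := by nlinarith [h1, h2, hVI', idG]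
  have hE : L * E1 ≤ L * E0 := mul_le_mul_of_nonneg_left h5 hL.le
  have k2 : lam / 2 * E1 + L / 2 * E1 ≤ L / 2 * D0 := by nlinarith [h4, k1, hE]
  have hfactor : 1 / (1 + lam / L) = L / (L + lam) := by
    have h1 : (0:ℝ) < 1 + lam / L := by positivity
    have h2 : (0:ℝ) < L + lam := by linarith
    rw [div_eq_div_iff h1.ne' h2.ne']
    field_simp
  rw [hfactor, div_mul_eq_mul_div, le_div_iff₀ (by linarith : (0:ℝ) < L + lam)]
  nlinarith [k2]
end
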